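/- arXiv:0802.4223 — 7 statements merged into one kernel-verified Lean document; each statement's English description precedes it below -/
import Mathlib

section
/- Let ω ∈ (0,1) be irrational, q = exp(2πiω), α ∈ (0,1], λ = exp(2πiα), and assume λ ∉ q^ℤ. Suppose the power series Σ_{n≥0} x^n/(q;q)_n and Σ_{n≥0} x^n/(1 − q^n λ) have positive radii of convergence R(ω) and r(α) respectively. Then the radius of convergence of φ_{(q;λ)}(x) = Σ_{n≥0} x^n/(λ;q)_n is at least R(ω)·min(1, r(α)). -/
open scoped BigOperators

/-- The q-Pochhammer symbol `(lam; q)_n = (1 - lam)(1 - q lam) ⋯ (1 - q^{n-1} lam)`. -/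
noncomputable def qPoch (q lam : ℂ) (n : ℕ) : ℂ :=
  ∏ k ∈ Finset.range n, (1 - q ^ k * lam)

/-- The radius of convergence of the power series `∑ c n * x ^ n`. -/
noncomputable def radiusOfConv (c : ℕ → ℂ) : ENNReal :=
  ⨆ (r : NNReal) (C : ℝ) (_ : ∀ n : ℕ, ‖c n‖ * (r : ℝ) ^ n ≤ C), (r : ENNReal)

lemma le_radiusOfConv {c : ℕ → ℂ} {ρ : NNReal} {C : ℝ}
    (h : ∀ n : ℕ, ‖c n‖ * (ρ : ℝ) ^ n ≤ C) : (ρ : ENNReal) ≤ radiusOfConv c := by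
  unfold radiusOfConv
  exact le_iSup_of_le ρ (le_iSup_of_le C (le_iSup_of_le h le_rfl))

lemma exists_bound_of_lt_radiusOfConv {c : ℕ → ℂ} {ρ : NNReal}
    (h : (ρ : ENNReal) < radiusOfConv c) :
    ∃ C : ℝ, 0 ≤ C ∧ ∀ n : ℕ, ‖c n‖ * (ρ : ℝ) ^ n ≤ C := by
  unfold radiusOfConv at h
  simp only [lt_iSup_iff] at h
  obtain ⟨r, C, hC, hρr⟩ := h
  have hρr' : (ρ : ℝ) ≤ (r : ℝ) := by exact_mod_cast hρr.le
  refine ⟨max C 0, le_max_right _ _, fun n => ?_⟩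
  calc ‖c n‖ * (ρ : ℝ) ^ n ≤ ‖c n‖ * (r : ℝ) ^ n := by
        gcongr
    _ ≤ C := hC n
    _ ≤ max C 0 := le_max_left _ _

lemma factor_eq {q lam : ℂ} (hq0 : q ≠ 0) {a b : ℤ} (h1 : q ^ (b - a) ≠ 1) :
    ((q ^ a)⁻¹ - (q ^ b)⁻¹)⁻¹ * (lam - (q ^ b)⁻¹)
      = (1 - q ^ b * lam) * ((1 : ℂ) - q ^ (b - a))⁻¹ := by
  have hqa : q ^ a ≠ 0 := zpow_ne_zero _ hq0
  have hqb : q ^ b ≠ 0 := zpow_ne_zero _ hq0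
  have h4 : q ^ a ≠ q ^ b := by
    intro h
    apply h1
    rw [zpow_sub₀ hq0, h, div_self hqb]
  have h2 : (q ^ a)⁻¹ - (q ^ b)⁻¹ ≠ 0 := sub_ne_zero.mpr (by exact fun h => h4 (inv_inj.mp h))
  have h3 : (1 : ℂ) - q ^ (b - a) ≠ 0 := fun h => h1 (sub_eq_zero.mp h).symm
  have h5 : q ^ a - q ^ b ≠ 0 := sub_ne_zero.mpr h4
  rw [inv_mul_eq_div, ← div_eq_mul_inv, div_eq_div_iff h2 h3]
  field_simp [zpow_sub₀ hq0]
  have hx : q ^ (b - a) * q ^ a = q ^ b := by rw [← zpow_add₀ hq0, sub_add_cancel]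
  linear_combination (1 - lam * q ^ b) * hx

lemma qPoch_inv_eq (q lam : ℂ) (hq0 : q ≠ 0)
    (hzpow : ∀ m : ℤ, m ≠ 0 → q ^ m ≠ 1)
    (hfac : ∀ k : ℕ, 1 - q ^ k * lam ≠ 0) {n : ℕ} (hn : 0 < n) :
    (qPoch q lam n)⁻¹ = ∑ k ∈ Finset.range n,
      (∏ j ∈ (Finset.range n).erase k, ((1 : ℂ) - q ^ ((j : ℤ) - (k : ℤ)))⁻¹)
        * (1 - q ^ k * lam)⁻¹ := by
  classical
  set v : ℕ → ℂ := fun k => (q ^ (k : ℤ))⁻¹ with hv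
  have hinj : Set.InjOn v (Finset.range n : Finset ℕ) := by
    intro i _ j _ hij
    simp only [hv] at hij
    have h1 : q ^ (i : ℤ) = q ^ (j : ℤ) := inv_inj.mp hij
    by_contra hne
    have hne' : (i : ℤ) - (j : ℤ) ≠ 0 := by
      intro h
      exact hne (by omega)
    exact hzpow _ hne' (by rw [zpow_sub₀ hq0, h1, div_self (zpow_ne_zero _ hq0)])
  have hsum := Lagrange.sum_basis hinj ⟨0, Finset.mem_range.2 hn⟩
  have heval := congrArg (Polynomial.eval lam) hsum
  simp only [Polynomial.eval_finset_sum, Polynomial.eval_one, Lagrange.basis,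
    Polynomial.eval_prod, Lagrange.basisDivisor, Polynomial.eval_mul, Polynomial.eval_C,
    Polynomial.eval_sub, Polynomial.eval_X] at heval
  -- heval : ∑ k ∈ range n, ∏ j ∈ erase, ((v k - v j)⁻¹ * (lam - v j)) = 1
  have hterm : ∀ k ∈ Finset.range n,
      (∏ j ∈ (Finset.range n).erase k, ((v k - v j)⁻¹ * (lam - v j)))
        = qPoch q lam n * ((1 - q ^ k * lam)⁻¹ *
            ∏ j ∈ (Finset.range n).erase k, ((1 : ℂ) - q ^ ((j : ℤ) - (k : ℤ)))⁻¹) := by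
    intro k hk
    have hstep : (∏ j ∈ (Finset.range n).erase k, ((v k - v j)⁻¹ * (lam - v j)))
        = ∏ j ∈ (Finset.range n).erase k,
            ((1 - q ^ j * lam) * ((1 : ℂ) - q ^ ((j : ℤ) - (k : ℤ)))⁻¹) := by
      refine Finset.prod_congr rfl fun j hj => ?_
      have hjk : j ≠ k := (Finset.mem_erase.mp hj).1
      have hne' : (j : ℤ) - (k : ℤ) ≠ 0 := by
        intro h; exact hjk (by omega)
      have := factor_eq (lam := lam) hq0 (a := (k : ℤ)) (b := (j : ℤ)) (hzpow _ hne')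
      simpa [hv, zpow_natCast] using this
    rw [hstep, Finset.prod_mul_distrib]
    have hsplit : (1 - q ^ k * lam) * ∏ j ∈ (Finset.range n).erase k, (1 - q ^ j * lam)
        = qPoch q lam n := by
      unfold qPoch
      exact Finset.mul_prod_erase (Finset.range n) (fun j => 1 - q ^ j * lam) hk
    have : (∏ j ∈ (Finset.range n).erase k, (1 - q ^ j * lam))
        = qPoch q lam n * (1 - q ^ k * lam)⁻¹ := by
      rw [← hsplit, mul_comm (1 - q ^ k * lam), mul_assoc, mul_inv_cancel₀ (hfac k), mul_one]
    rw [this]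
    ring
  rw [Finset.sum_congr rfl hterm, ← Finset.mul_sum] at heval
  rw [inv_eq_of_mul_eq_one_right heval]
  refine Finset.sum_congr rfl fun k _ => ?_
  ring

lemma norm_prod_erase (q : ℂ) (habs : ‖q‖ = 1) {n k : ℕ} (hk : k < n) :
    ‖∏ j ∈ (Finset.range n).erase k, ((1 : ℂ) - q ^ ((j : ℤ) - (k : ℤ)))‖
      = ‖qPoch q q k‖ * ‖qPoch q q (n - 1 - k)‖ := by
  have hq0 : q ≠ 0 := by
    intro h
    rw [h] at habs
    simp at habs
  have hz : ∀ m : ℤ, ‖q ^ m‖ = 1 := fun m => by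
    rw [norm_zpow, habs, one_zpow]
  have hneg : ∀ m : ℤ, ‖(1 : ℂ) - q ^ (-m)‖ = ‖(1 : ℂ) - q ^ m‖ := by
    intro m
    have h1 : (1 : ℂ) - q ^ (-m) = q ^ (-m) * (q ^ m - 1) := by
      rw [mul_sub, ← zpow_add₀ hq0]
      simp
    rw [h1, norm_mul, hz, one_mul, norm_sub_rev]
  have hset : (Finset.range n).erase k = Finset.range k ∪ Finset.Ico (k + 1) n := by
    ext j
    simp only [Finset.mem_erase, Finset.mem_range, Finset.mem_union, Finset.mem_Ico]
    omega
  have hdisj : Disjoint (Finset.range k) (Finset.Ico (k + 1) n) := by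
    simp only [Finset.disjoint_left, Finset.mem_range, Finset.mem_Ico]
    omega
  rw [hset, Finset.prod_union hdisj, norm_mul]
  congr 1
  · unfold qPoch
    rw [norm_prod, norm_prod, ← Finset.prod_range_reflect]
    refine Finset.prod_congr rfl fun j hj => ?_
    have hj' : j < k := Finset.mem_range.mp hj
    have h2 : ((k - 1 - j : ℕ) : ℤ) - (k : ℤ) = -((j : ℤ) + 1) := by omega
    rw [h2, hneg ((j : ℤ) + 1)]
    rw [show ((j : ℤ) + 1) = ((j + 1 : ℕ) : ℤ) by push_cast; ring, zpow_natCast, pow_succ]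
  · unfold qPoch
    rw [norm_prod, norm_prod, Finset.prod_Ico_eq_prod_range,
      show n - (k + 1) = n - 1 - k by omega]
    refine Finset.prod_congr rfl fun j hj => ?_
    rw [show ((k + 1 + j : ℕ) : ℤ) - (k : ℤ) = ((j + 1 : ℕ) : ℤ) by push_cast; ring,
      zpow_natCast, pow_succ]

theorem stmt1 (ω : ℝ) (hω : ω ∈ Set.Ioo (0 : ℝ) 1) (hirr : Irrational ω)
    (α : ℝ) (hα : α ∈ Set.Ioc (0 : ℝ) 1)
    (q lam : ℂ) (hq : q = Complex.exp (2 * Real.pi * Complex.I * ω))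
    (hlam : lam = Complex.exp (2 * Real.pi * Complex.I * α))
    (hnot : ∀ k : ℤ, lam ≠ q ^ k)
    (hR : 0 < radiusOfConv (fun n => (qPoch q q n)⁻¹))
    (hr : 0 < radiusOfConv (fun n => (1 - q ^ n * lam)⁻¹)) :
    radiusOfConv (fun n => (qPoch q q n)⁻¹) *
        min 1 (radiusOfConv (fun n => (1 - q ^ n * lam)⁻¹)) ≤
      radiusOfConv (fun n => (qPoch q lam n)⁻¹) := by
  classical
  have habs : ‖q‖ = 1 := by
    rw [hq, show (2 * (Real.pi : ℂ) * Complex.I * (ω : ℂ))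
        = ((2 * Real.pi * ω : ℝ) : ℂ) * Complex.I by push_cast; ring]
    exact Complex.norm_exp_ofReal_mul_I _
  have hq0 : q ≠ 0 := by
    intro h
    rw [h] at habs
    simp at habs
  have hzpow : ∀ m : ℤ, m ≠ 0 → q ^ m ≠ 1 := by
    intro m hm h
    rw [hq, ← Complex.exp_int_mul] at h
    obtain ⟨nn, hnn⟩ := Complex.exp_eq_one_iff.mp h
    have hπ : (2 * (Real.pi : ℂ) * Complex.I) ≠ 0 := by
      simp [Real.pi_ne_zero, Complex.I_ne_zero]
    have h2 : ((m : ℂ) * (ω : ℂ)) = (nn : ℂ) := by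
      have h3 : ((m : ℂ) * (ω : ℂ) - (nn : ℂ)) * (2 * (Real.pi : ℂ) * Complex.I) = 0 := by
        linear_combination hnn
      rcases mul_eq_zero.mp h3 with h4 | h4
      · exact sub_eq_zero.mp h4
      · exact absurd h4 hπ
    have h5 : (m : ℝ) * ω = (nn : ℝ) := by exact_mod_cast h2
    have h6 := hirr.intCast_mul hm
    rw [h5] at h6
    exact Int.not_irrational nn h6
  have hfac : ∀ k : ℕ, 1 - q ^ k * lam ≠ 0 := by
    intro k h
    have h1 : q ^ k * lam = 1 := by linear_combination -h
    have h2 : lam = q ^ (-(k : ℤ)) := by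
      rw [zpow_neg, zpow_natCast]
      exact (inv_eq_of_mul_eq_one_right h1).symm
    exact hnot _ h2
  set Rq := radiusOfConv (fun n => (qPoch q q n)⁻¹) with hRq
  set rr := radiusOfConv (fun n => (1 - q ^ n * lam)⁻¹) with hrr
  set m := min 1 rr with hm
  have hm0 : m ≠ 0 := (lt_min one_pos hr).ne'
  have hmtop : m ≠ ⊤ := ne_top_of_le_ne_top (by simp) (min_le_left _ _)
  refine ENNReal.le_of_forall_nnreal_lt fun t ht => ?_
  rcases eq_or_ne t 0 with rfl | ht0
  · simp
  have ht0' : (t : ENNReal) ≠ 0 := by exact_mod_cast ht0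
  have htm : (t : ENNReal) / m < Rq :=
    (ENNReal.div_lt_iff (Or.inl hm0) (Or.inl hmtop)).mpr (by rw [mul_comm] at ht ⊢; exact ht)
  obtain ⟨ρ, hρ1, hρ2⟩ := ENNReal.lt_iff_exists_nnreal_btwn.mp htm
  have hρ0 : (ρ : ENNReal) ≠ 0 :=
    ((ENNReal.div_pos ht0' hmtop).trans hρ1).ne'
  have htρm : (t : ENNReal) < (ρ : ENNReal) * m :=
    (ENNReal.div_lt_iff (Or.inl hm0) (Or.inl hmtop)).mp hρ1
  have htρ : (t : ENNReal) / ρ < m :=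
    (ENNReal.div_lt_iff (Or.inl hρ0) (Or.inl ENNReal.coe_ne_top)).mpr
      (by rw [mul_comm]; exact htρm)
  obtain ⟨σ, hσ1, hσ2⟩ := ENNReal.lt_iff_exists_nnreal_btwn.mp htρ
  have htσρ : t < ρ * σ := by
    have := (ENNReal.div_lt_iff (Or.inl hρ0) (Or.inl ENNReal.coe_ne_top)).mp hσ1
    rw [mul_comm] at this
    exact_mod_cast this
  have hσ1' : (σ : ℝ) ≤ 1 := by
    have : (σ : ENNReal) ≤ 1 := (hσ2.trans_le (min_le_left _ _)).le
    exact_mod_cast this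
  have hσr : (σ : ENNReal) < rr := hσ2.trans_le (min_le_right _ _)
  obtain ⟨C, hC0, hC⟩ := exists_bound_of_lt_radiusOfConv hρ2
  obtain ⟨D, hD0, hD⟩ := exists_bound_of_lt_radiusOfConv hσr
  set M := C * C * (D * (ρ : ℝ)) with hM
  have key : ∀ n : ℕ, 0 < n →
      ‖(qPoch q lam n)⁻¹‖ * ((ρ : ℝ) * (σ : ℝ)) ^ n ≤ n * M := by
    intro n hn
    rw [qPoch_inv_eq q lam hq0 hzpow hfac hn]
    calc ‖∑ k ∈ Finset.range n,
            (∏ j ∈ (Finset.range n).erase k, ((1 : ℂ) - q ^ ((j : ℤ) - (k : ℤ)))⁻¹)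
              * (1 - q ^ k * lam)⁻¹‖ * ((ρ : ℝ) * (σ : ℝ)) ^ n
        ≤ (∑ k ∈ Finset.range n,
            ‖(∏ j ∈ (Finset.range n).erase k, ((1 : ℂ) - q ^ ((j : ℤ) - (k : ℤ)))⁻¹)
              * (1 - q ^ k * lam)⁻¹‖) * ((ρ : ℝ) * (σ : ℝ)) ^ n := by
          gcongr
          exact norm_sum_le _ _
      _ = ∑ k ∈ Finset.range n,
            ‖(∏ j ∈ (Finset.range n).erase k, ((1 : ℂ) - q ^ ((j : ℤ) - (k : ℤ)))⁻¹)
              * (1 - q ^ k * lam)⁻¹‖ * ((ρ : ℝ) * (σ : ℝ)) ^ n := Finset.sum_mul _ _ _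
      _ ≤ ∑ _k ∈ Finset.range n, M := by
          refine Finset.sum_le_sum fun k hk => ?_
          have hkn : k < n := Finset.mem_range.mp hk
          have hBnorm : ‖∏ j ∈ (Finset.range n).erase k,
              ((1 : ℂ) - q ^ ((j : ℤ) - (k : ℤ)))⁻¹‖
              = ‖(qPoch q q k)⁻¹‖ * ‖(qPoch q q (n - 1 - k))⁻¹‖ := by
            rw [Finset.prod_inv_distrib, norm_inv, norm_prod_erase q habs hkn,
              mul_inv, norm_inv, norm_inv]
          rw [norm_mul, hBnorm]
          set a := ‖(qPoch q q k)⁻¹‖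
          set b := ‖(qPoch q q (n - 1 - k))⁻¹‖
          set d := ‖(1 - q ^ k * lam)⁻¹‖
          have ha : a * (ρ : ℝ) ^ k ≤ C := hC k
          have hb : b * (ρ : ℝ) ^ (n - 1 - k) ≤ C := hC (n - 1 - k)
          have hd : d * (σ : ℝ) ^ k ≤ D := hD k
          have hρn : (ρ : ℝ) ^ n = (ρ : ℝ) ^ k * (ρ : ℝ) ^ (n - 1 - k) * (ρ : ℝ) := by
            rw [← pow_add, ← pow_succ]
            congr 1
            omega
          have hσn : (σ : ℝ) ^ n = (σ : ℝ) ^ k * (σ : ℝ) ^ (n - k) := by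
            rw [← pow_add]
            congr 1
            omega
          have heq : a * b * d * ((ρ : ℝ) * (σ : ℝ)) ^ n
              = (a * (ρ : ℝ) ^ k * (b * (ρ : ℝ) ^ (n - 1 - k)))
                * (d * (σ : ℝ) ^ k * ((ρ : ℝ) * (σ : ℝ) ^ (n - k))) := by
            rw [mul_pow, hρn, hσn]
            ring
          rw [heq]
          have t1 : a * (ρ : ℝ) ^ k * (b * (ρ : ℝ) ^ (n - 1 - k)) ≤ C * C :=
            mul_le_mul ha hb (by positivity) hC0
          have hσpow : (ρ : ℝ) * (σ : ℝ) ^ (n - k) ≤ (ρ : ℝ) :=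
            mul_le_of_le_one_right (by positivity)
              (pow_le_one₀ (by positivity) hσ1')
          have t2 : d * (σ : ℝ) ^ k * ((ρ : ℝ) * (σ : ℝ) ^ (n - k)) ≤ D * (ρ : ℝ) :=
            mul_le_mul hd hσpow (by positivity) hD0
          calc (a * (ρ : ℝ) ^ k * (b * (ρ : ℝ) ^ (n - 1 - k)))
                * (d * (σ : ℝ) ^ k * ((ρ : ℝ) * (σ : ℝ) ^ (n - k)))
              ≤ (C * C) * (D * (ρ : ℝ)) :=
                mul_le_mul t1 t2 (by positivity) (mul_nonneg hC0 hC0)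
            _ = M := by rw [hM]
      _ = n * M := by
          rw [Finset.sum_const, Finset.card_range, nsmul_eq_mul]
  -- boundedness of the shifted sequence
  have hρσ0 : (0 : ℝ) < (ρ : ℝ) * (σ : ℝ) := by
    have h0 : (0 : NNReal) < ρ * σ := lt_of_le_of_lt zero_le htσρ
    exact_mod_cast h0
  set θ : ℝ := (t : ℝ) / ((ρ : ℝ) * (σ : ℝ)) with hθ
  have hθ0 : 0 ≤ θ := by positivity
  have hθ1 : θ < 1 := by
    rw [hθ, div_lt_one hρσ0]
    exact_mod_cast htσρ
  have htend := (tendsto_self_mul_const_pow_of_lt_one hθ0 hθ1).const_mul M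
  obtain ⟨B, hB⟩ := htend.bddAbove_range
  refine le_radiusOfConv (C := max B 1) fun n => ?_
  rcases Nat.eq_zero_or_pos n with rfl | hn
  · simp [qPoch]
  · have h1 : (t : ℝ) ^ n = ((ρ : ℝ) * (σ : ℝ)) ^ n * θ ^ n := by
      rw [hθ, div_pow]
      field_simp
    calc ‖(qPoch q lam n)⁻¹‖ * (t : ℝ) ^ n
        = (‖(qPoch q lam n)⁻¹‖ * ((ρ : ℝ) * (σ : ℝ)) ^ n) * θ ^ n := by rw [h1]; ring
      _ ≤ ((n : ℝ) * M) * θ ^ n :=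
          mul_le_mul_of_nonneg_right (key n hn) (by positivity)
      _ = M * ((n : ℝ) * θ ^ n) := by ring
      _ ≤ B := hB (Set.mem_range_self n)
      _ ≤ max B 1 := le_max_left _ _
end

section
/- Let q ∈ ℂ*, not a root of unity, and let λ ∈ ℂ satisfy q^n λ ≠ 1 for all integers n ≥ 0. Then the following identity of formal power series in ℂ[[x]] holds: Σ_{n≥0} x^n/((1−qλ)(1−q²λ)···(1−q^n λ)) = (1−λ) · (Σ_{n≥0} x^n/(q;q)_n) · (Σ_{n≥0} q^{n(n+1)/2} (−x)^n/((q;q)_n (1 − q^n λ))), where the empty product for n = 0 in the left-hand series is 1. -/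
open scoped BigOperators

lemma qPoch_zero (q lam : ℂ) : qPoch q lam 0 = 1 := by simp [qPoch]

lemma qPoch_succ (q lam : ℂ) (k : ℕ) :
    qPoch q lam (k+1) = qPoch q lam k * (1 - q ^ k * lam) := by
  rw [qPoch, qPoch, Finset.prod_range_succ]

lemma qPoch_shift (q lam : ℂ) (n : ℕ) :
    qPoch q lam (n+1) = qPoch q (q*lam) n * (1 - lam) := by
  rw [qPoch, Finset.prod_range_succ', qPoch]
  simp only [pow_zero, one_mul]
  congr 1
  refine Finset.prod_congr rfl fun k _ => ?_
  ring

lemma qPoch_q_ne_zero (q : ℂ) (hq : ∀ n : ℕ, 1 ≤ n → q ^ n ≠ 1) (n : ℕ) :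
    qPoch q q n ≠ 0 := by
  refine Finset.prod_ne_zero_iff.mpr fun k _ => ?_
  have h : q ^ k * q = q ^ (k+1) := (pow_succ q k).symm
  rw [h]
  exact sub_ne_zero_of_ne fun h' => hq (k+1) (by omega) h'.symm

lemma pf (s e a b t l : ℂ) (ha : a ≠ 0) (hb : b ≠ 0) (hl : 1 - l ≠ 0)
    (ht : 1 - t ≠ 0) (htl : 1 - t * l ≠ 0) :
    s * e * (a * b * (1 - t * l))⁻¹ * (1 - l)⁻¹
      = s * -1 * (e * t) * (a * (1 - t) * b * (1 - t * l))⁻¹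
        + s * e * (a * b * (1 - t))⁻¹ * (1 - l)⁻¹ := by
  have h : (1 - t*l)⁻¹ * (1-l)⁻¹ = -t * ((1-t)⁻¹ * (1-t*l)⁻¹) + (1-t)⁻¹ * (1-l)⁻¹ := by
    field_simp
    ring
  simp only [mul_inv]
  linear_combination (s * e * a⁻¹ * b⁻¹) * h

lemma key (q : ℂ) (hq : ∀ n : ℕ, 1 ≤ n → q ^ n ≠ 1) :
    ∀ n : ℕ, ∀ lam : ℂ, (∀ m : ℕ, q ^ m * lam ≠ 1) →
    ∑ k ∈ Finset.range (n+1),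
      (-1)^k * q^(k*(k+1)/2) * (qPoch q q k * qPoch q q (n-k) * (1 - q^k*lam))⁻¹
      = (qPoch q lam (n+1))⁻¹ := by
  intro n
  induction n with
  | zero =>
    intro lam hlam
    simp [qPoch]
  | succ n ih =>
    intro lam hlam
    have hw : (1 : ℂ) - lam ≠ 0 := by
      have := hlam 0
      simp only [pow_zero, one_mul] at this
      exact sub_ne_zero_of_ne fun h => this h.symm
    have hlam' : ∀ m : ℕ, q ^ m * (q*lam) ≠ 1 := by
      intro m
      have h : q ^ m * (q*lam) = q ^ (m+1) * lam := by ring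
      rw [h]; exact hlam (m+1)
    have hlamq : ∀ m : ℕ, q ^ m * q ≠ 1 := by
      intro m
      rw [← pow_succ]
      exact hq (m+1) (by omega)
    have IH1 := ih (q*lam) hlam'
    have IH2 := ih q hlamq
    -- split off the k = 0 term on the LHS
    rw [Finset.sum_range_succ'
      (fun k => (-1)^k * q^(k*(k+1)/2)
        * (qPoch q q k * qPoch q q (n+1-k) * (1 - q^k*lam))⁻¹) (n+1)]
    -- rewrite RHS via the shift and IH1
    rw [qPoch_shift q lam (n+1)]
    conv_rhs => rw [mul_inv]
    rw [← IH1, Finset.sum_mul]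
    have hstep : ∀ k ∈ Finset.range (n+1),
        (-1)^k * q^(k*(k+1)/2) * (qPoch q q k * qPoch q q (n-k) * (1 - q^k*(q*lam)))⁻¹
            * (1-lam)⁻¹
        = (-1)^(k+1) * q^((k+1)*(k+1+1)/2)
            * (qPoch q q (k+1) * qPoch q q (n+1-(k+1)) * (1 - q^(k+1)*lam))⁻¹
          + (-1)^k * q^(k*(k+1)/2) * (qPoch q q k * qPoch q q (n-k) * (1 - q^k*q))⁻¹
            * (1-lam)⁻¹ := by
      intro k hk
      have e1 : n + 1 - (k+1) = n - k := by omega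
      have e2 : (k+1)*(k+1+1)/2 = k*(k+1)/2 + (k+1) := by
        obtain ⟨m, hm⟩ := Nat.even_mul_succ_self k
        have hx : (k+1)*(k+1+1) = k*(k+1) + 2*(k+1) := by ring
        rw [hx, hm]; omega
      have hA : qPoch q q k ≠ 0 := qPoch_q_ne_zero q hq k
      have hB : qPoch q q (n-k) ≠ 0 := qPoch_q_ne_zero q hq (n-k)
      have hu : (1 : ℂ) - q^k*q ≠ 0 := by
        rw [← pow_succ]
        exact sub_ne_zero_of_ne fun h => hq (k+1) (by omega) h.symm
      have hz : (1 : ℂ) - q^(k+1)*lam ≠ 0 :=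
        sub_ne_zero_of_ne fun h => hlam (k+1) h.symm
      have hz' : (1 : ℂ) - q^k*(q*lam) = 1 - q^(k+1)*lam := by ring
      rw [e1, e2, pow_add q (k*(k+1)/2) (k+1), qPoch_succ, hz', ← pow_succ q k,
        pow_succ (-1 : ℂ) k]
      rw [← pow_succ q k] at hu
      exact pf ((-1)^k) (q^(k*(k+1)/2)) (qPoch q q k) (qPoch q q (n-k)) (q^(k+1)) lam
        hA hB hw hu hz
    rw [Finset.sum_congr rfl hstep, Finset.sum_add_distrib, ← Finset.sum_mul, IH2]
    simp only [pow_zero, one_mul, Nat.sub_zero, qPoch_zero, Nat.zero_mul,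
      Nat.zero_div]
    rw [mul_inv]

theorem stmt2 (q lam : ℂ) (hq0 : q ≠ 0) (hq : ∀ n : ℕ, 1 ≤ n → q ^ n ≠ 1)
    (hlam : ∀ n : ℕ, q ^ n * lam ≠ 1) :
    (PowerSeries.mk fun n => (qPoch q (q * lam) n)⁻¹) =
      PowerSeries.C (1 - lam) *
        (PowerSeries.mk fun n => (qPoch q q n)⁻¹) *
        (PowerSeries.mk fun n =>
          q ^ (n * (n + 1) / 2) * (-1) ^ n * (qPoch q q n * (1 - q ^ n * lam))⁻¹) := by
  ext n
  rw [PowerSeries.coeff_mk, mul_assoc, PowerSeries.coeff_C_mul, PowerSeries.coeff_mul,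
    Finset.Nat.sum_antidiagonal_eq_sum_range_succ_mk]
  simp only [PowerSeries.coeff_mk]
  have hw : (1 : ℂ) - lam ≠ 0 := by
    have := hlam 0
    simp only [pow_zero, one_mul] at this
    exact sub_ne_zero_of_ne fun h => this h.symm
  have hrefl :
      ∑ k ∈ Finset.range (n+1),
        (qPoch q q k)⁻¹ *
          (q ^ ((n-k) * (n-k + 1) / 2) * (-1) ^ (n-k)
            * (qPoch q q (n-k) * (1 - q ^ (n-k) * lam))⁻¹)
      = ∑ k ∈ Finset.range (n+1),
        (-1)^k * q^(k*(k+1)/2) * (qPoch q q k * qPoch q q (n-k) * (1 - q^k*lam))⁻¹ := by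
    rw [← Finset.sum_range_reflect]
    refine Finset.sum_congr rfl fun k hk => ?_
    have hk' : k ≤ n := by
      have := Finset.mem_range.mp hk; omega
    have e1 : n + 1 - 1 - k = n - k := by omega
    have e2 : n - (n - k) = k := by omega
    rw [e1, e2, mul_inv, mul_inv]
    ring
  have hX : qPoch q (q * lam) n ≠ 0 := by
    refine Finset.prod_ne_zero_iff.mpr fun k _ => ?_
    have h : q ^ k * (q * lam) = q ^ (k+1) * lam := by ring
    rw [h]
    exact sub_ne_zero_of_ne fun h' => hlam (k+1) h'.symm
  rw [hrefl, key q hq n lam hlam, qPoch_shift q lam n, mul_inv]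
  field_simp
end

section
/- Let ω ∈ (0,1) be irrational, q = exp(2πiω), α ∈ ℝ, λ = exp(2πiα), and suppose nω + α ∉ ℤ for all integers n ≥ 0 (so 1 − q^n λ ≠ 0 for all n ≥ 0). Then the following assertions are equivalent: (1) the power series Σ_{n≥0} x^n/(1 − q^n λ) has positive radius of convergence; (2) limsup_{n→∞} (1/n)·log(1/|1 − λ q^n|) < +∞; (3) liminf_{n→∞} ‖nω + α‖_ℤ^{1/n} > 0. -/
open scoped BigOperators

/-- The distance from a real number to the nearest integer. -/
noncomputable def distInt (x : ℝ) : ℝ := ⨅ k : ℤ, |x + (k : ℝ)|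

lemma distInt_eq (x : ℝ) : distInt x = |x - round x| := by
  apply le_antisymm
  · have := ciInf_le (f := fun k : ℤ => |x + (k:ℝ)|) ⟨0, by rintro y ⟨k, rfl⟩; positivity⟩ (-round x)
    simpa [distInt, sub_eq_add_neg] using this
  · apply le_ciInf
    intro k
    have := round_le x (-k)
    simpa [sub_neg_eq_add] using this

lemma distInt_nonneg (x : ℝ) : 0 ≤ distInt x := by rw [distInt_eq]; positivity

lemma distInt_le_half (x : ℝ) : distInt x ≤ 1 / 2 := by
  rw [distInt_eq]; exact abs_sub_round x

lemma distInt_pos {x : ℝ} (h : ∀ k : ℤ, x ≠ (k : ℝ)) : 0 < distInt x := by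
  rw [distInt_eq, abs_pos, sub_ne_zero]
  exact h (round x)

lemma abs_sin_pi_eq (x : ℝ) :
    |Real.sin (Real.pi * x)| = Real.sin (Real.pi * distInt x) := by
  set y := x - round x with hy
  have h1 : Real.pi * x = Real.pi * y + (round x : ℝ) * Real.pi := by rw [hy]; ring
  rw [h1, Real.sin_add, Real.sin_int_mul_pi, mul_zero, add_zero, abs_mul,
    Real.abs_cos_int_mul_pi, mul_one]
  have h2 : |Real.sin (Real.pi * y)| = |Real.sin (Real.pi * |y|)| := by
    rcases abs_cases y with ⟨h, _⟩ | ⟨h, _⟩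
    · rw [h]
    · rw [h, mul_neg, Real.sin_neg, abs_neg]
  have hy2 : |y| ≤ 1 / 2 := abs_sub_round x
  rw [h2, distInt_eq, ← hy]
  exact abs_of_nonneg (Real.sin_nonneg_of_nonneg_of_le_pi (by positivity)
    (by nlinarith [Real.pi_pos, abs_nonneg y]))

lemma abs_one_sub_exp' (θ : ℝ) :
    ‖1 - Complex.exp (2 * Real.pi * Complex.I * θ)‖ = 2 * |Real.sin (Real.pi * θ)| := by
  set φ : ℂ := ((Real.pi * θ : ℝ) : ℂ) with hφ
  have h1 : (2 * (Real.pi:ℂ) * Complex.I * θ) = 2 * (φ * Complex.I) := by rw [hφ]; push_cast; ring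
  rw [h1]
  have he : Complex.exp (φ * Complex.I) ≠ 0 := Complex.exp_ne_zero _
  have h2 : 1 - Complex.exp (2 * (φ * Complex.I)) =
      -Complex.exp (φ * Complex.I) * (2 * Complex.I * Complex.sin φ) := by
    rw [Complex.sin, show (-φ * Complex.I) = -(φ * Complex.I) by ring, Complex.exp_neg,
      two_mul, Complex.exp_add]
    field_simp
    ring_nf
    rw [Complex.I_sq]
    ring
  rw [h2, norm_mul, norm_mul, norm_mul, norm_neg, Complex.norm_exp, Complex.norm_two,
    Complex.norm_I]
  have : Complex.sin φ = ((Real.sin (Real.pi * θ) : ℝ) : ℂ) := by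
    rw [hφ, Complex.ofReal_sin]
  rw [this, Complex.norm_real]
  simp [Complex.mul_I_re, hφ]

lemma comp_bounds (x : ℝ) :
    4 * distInt x ≤ ‖1 - Complex.exp (2 * Real.pi * Complex.I * x)‖ ∧
      ‖1 - Complex.exp (2 * Real.pi * Complex.I * x)‖ ≤ 2 * Real.pi * distInt x := by
  rw [abs_one_sub_exp', abs_sin_pi_eq]
  have hd0 := distInt_nonneg x
  have hdh := distInt_le_half x
  have hpi := Real.pi_pos
  constructor
  · have := Real.mul_le_sin (x := Real.pi * distInt x) (by positivity) (by nlinarith)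
    have h2 : 2 / Real.pi * (Real.pi * distInt x) = 2 * distInt x := by field_simp
    nlinarith
  · have := Real.sin_le (x := Real.pi * distInt x) (by positivity)
    nlinarith

theorem stmt7 (ω : ℝ) (hω : ω ∈ Set.Ioo (0 : ℝ) 1) (hirr : Irrational ω) (α : ℝ)
    (q lam : ℂ) (hq : q = Complex.exp (2 * Real.pi * Complex.I * ω))
    (hlam : lam = Complex.exp (2 * Real.pi * Complex.I * α))
    (hnz : ∀ n : ℕ, ∀ k : ℤ, (n : ℝ) * ω + α ≠ (k : ℝ)) :
    List.TFAE
      [0 < radiusOfConv (fun n => (1 - q ^ n * lam)⁻¹),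
        Filter.limsup
            (fun n : ℕ => ((Real.log (1 / ‖1 - lam * q ^ n‖) / n : ℝ) : EReal))
            Filter.atTop < ⊤,
        0 < Filter.liminf (fun n : ℕ => distInt ((n : ℝ) * ω + α) ^ ((1 : ℝ) / n))
            Filter.atTop] := by
  set x : ℕ → ℝ := fun n => (n : ℝ) * ω + α with hx
  set d : ℕ → ℝ := fun n => distInt (x n) with hdDef
  set a : ℕ → ℝ := fun n => ‖1 - lam * q ^ n‖ with haDef
  have hqlam : ∀ n : ℕ, lam * q ^ n = Complex.exp (2 * Real.pi * Complex.I * (x n : ℝ)) := by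
    intro n
    rw [hq, hlam, ← Complex.exp_nat_mul, ← Complex.exp_add]
    congr 1
    push_cast [hx]
    ring
  have hd0 : ∀ n, 0 < d n := fun n => distInt_pos (hnz n)
  have hdh : ∀ n, d n ≤ 1 / 2 := fun n => distInt_le_half (x n)
  have hlb : ∀ n, 4 * d n ≤ a n := by
    intro n; rw [haDef]; simp only [hqlam n]; exact (comp_bounds (x n)).1
  have hub : ∀ n, a n ≤ 2 * Real.pi * d n := by
    intro n; rw [haDef]; simp only [hqlam n]; exact (comp_bounds (x n)).2
  have ha0 : ∀ n, 0 < a n := fun n => lt_of_lt_of_le (by have := hd0 n; linarith) (hlb n)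
  have hnorm : ∀ n : ℕ, ‖(1 - q ^ n * lam)⁻¹‖ = (a n)⁻¹ := by
    intro n
    rw [norm_inv, mul_comm]
  have hpi := Real.pi_pos
  tfae_have 1 → 2 := by
    intro h1
    rw [radiusOfConv] at h1
    rw [lt_iSup_iff] at h1
    obtain ⟨r, h1⟩ := h1
    rw [lt_iSup_iff] at h1
    obtain ⟨C, h1⟩ := h1
    rw [lt_iSup_iff] at h1
    obtain ⟨hb, hr⟩ := h1
    have hrpos : (0 : ℝ) < r := by exact_mod_cast hr
    have hCpos : (0 : ℝ) < C := by
      have := hb 0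
      have h0 : 0 < ‖(1 - q ^ 0 * lam)⁻¹‖ := by
        rw [hnorm 0]
        exact inv_pos.mpr (ha0 0)
      nlinarith
    set K : ℝ := |Real.log C| + |Real.log r| with hK
    have hev : ∀ᶠ n : ℕ in Filter.atTop,
        ((Real.log (1 / a n) / n : ℝ) : EReal) ≤ (K : EReal) := by
      rw [Filter.eventually_atTop]
      refine ⟨1, fun n hn => ?_⟩
      rw [EReal.coe_le_coe_iff]
      have han := ha0 n
      have hrn : (0 : ℝ) < (r : ℝ) ^ n := by positivity
      have hge : (r : ℝ) ^ n / C ≤ a n := by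
        have h2 := hb n
        rw [hnorm n] at h2
        rw [div_le_iff₀ hCpos]
        calc (r:ℝ)^n = a n * ((a n)⁻¹ * (r:ℝ)^n) := by field_simp
          _ ≤ a n * C := by nlinarith [inv_pos.mpr han]
      have hlog : Real.log (1 / a n) ≤ Real.log C - n * Real.log r := by
        rw [Real.log_div one_ne_zero han.ne', Real.log_one, zero_sub]
        have := (Real.log_le_log_iff (by positivity) han).mpr hge
        rw [Real.log_div hrn.ne' hCpos.ne', Real.log_pow] at this
        linarith
      have hn1 : (1 : ℝ) ≤ (n : ℝ) := by exact_mod_cast hn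
      have hnpos : (0 : ℝ) < n := by linarith
      rw [div_le_iff₀ hnpos]
      have h5 : Real.log C ≤ |Real.log C| * n := by
        calc Real.log C ≤ |Real.log C| := le_abs_self _
          _ = |Real.log C| * 1 := by ring
          _ ≤ |Real.log C| * n := by nlinarith [abs_nonneg (Real.log C)]
      have h6 : -(n : ℝ) * Real.log r ≤ |Real.log r| * n := by
        have : -Real.log r ≤ |Real.log r| := neg_le_abs _
        nlinarith
      calc Real.log (1 / a n) ≤ Real.log C - n * Real.log r := hlog
        _ ≤ |Real.log C| * n + |Real.log r| * n := by linarith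
        _ = K * n := by rw [hK]; ring
    show Filter.limsup (fun n : ℕ => ((Real.log (1 / a n) / n : ℝ) : EReal)) Filter.atTop < ⊤
    exact lt_of_le_of_lt (Filter.limsup_le_of_le (h := hev)) (EReal.coe_lt_top K)
  tfae_have 2 → 3 := by
    intro h2
    obtain ⟨b, hb1, -⟩ := EReal.lt_iff_exists_real_btwn.mp h2
    have hev := Filter.eventually_lt_of_limsup_lt hb1
    set c : ℝ := Real.exp (-(b + 1)) with hc
    have hcpos : 0 < c := Real.exp_pos _
    have hev2 : ∀ᶠ n : ℕ in Filter.atTop, c ≤ d n ^ ((1 : ℝ) / n) := by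
      filter_upwards [hev, Filter.eventually_ge_atTop 2] with n hn h2n
      have hn1 : (1 : ℝ) ≤ (n : ℝ) := by exact_mod_cast Nat.one_le_of_lt h2n
      have hnpos : (0 : ℝ) < n := by linarith
      rw [EReal.coe_lt_coe_iff] at hn
      have han := ha0 n
      have hlog : Real.log (1 / a n) < b * n := by
        rw [div_lt_iff₀ hnpos] at hn; linarith [hn]
      have hexp : Real.exp (-(b * n)) < a n := by
        rw [Real.log_div one_ne_zero han.ne', Real.log_one, zero_sub] at hlog
        have : -(b * n) < Real.log (a n) := by linarith
        calc Real.exp (-(b * n)) < Real.exp (Real.log (a n)) := Real.exp_lt_exp.mpr this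
          _ = a n := Real.exp_log han
      have hcn : c ^ n ≤ d n := by
        have hcn1 : c ^ n = Real.exp (-(b * n)) * Real.exp (-(n : ℝ)) := by
          rw [hc, ← Real.exp_nat_mul, ← Real.exp_add]
          congr 1
          ring
        have he2 : Real.exp (-(n : ℝ)) ≤ Real.exp (-2 : ℝ) := by
          apply Real.exp_le_exp.mpr
          have h2n' : (2 : ℝ) ≤ (n : ℝ) := by exact_mod_cast h2n
          linarith
        have h2pi : 2 * Real.pi ≤ Real.exp 2 := by
          have h1 : (2.7182818283 : ℝ) < Real.exp 1 := Real.exp_one_gt_d9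
          have h2 : Real.exp 2 = Real.exp 1 * Real.exp 1 := by rw [← Real.exp_add]; norm_num
          nlinarith [Real.pi_lt_d2]
        have hee : Real.exp (-2 : ℝ) ≤ 1 / (2 * Real.pi) := by
          have hmul : Real.exp (-2 : ℝ) * Real.exp 2 = 1 := by rw [← Real.exp_add]; norm_num
          rw [le_div_iff₀ (by positivity)]
          calc Real.exp (-2:ℝ) * (2 * Real.pi) ≤ Real.exp (-2:ℝ) * Real.exp 2 :=
              mul_le_mul_of_nonneg_left h2pi (Real.exp_pos _).le
            _ = 1 := hmul
        rw [hcn1]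
        calc Real.exp (-(b * n)) * Real.exp (-(n : ℝ))
            ≤ a n * (1 / (2 * Real.pi)) :=
              mul_le_mul hexp.le (he2.trans hee) (Real.exp_pos _).le (ha0 n).le
          _ ≤ (2 * Real.pi * d n) * (1 / (2 * Real.pi)) :=
              mul_le_mul_of_nonneg_right (hub n) (by positivity)
          _ = d n := by field_simp
      calc c = (c ^ n) ^ ((1 : ℝ) / n) := by
            rw [← Real.rpow_natCast c n, ← Real.rpow_mul hcpos.le, mul_one_div,
              div_self hnpos.ne', Real.rpow_one]
        _ ≤ d n ^ ((1 : ℝ) / n) :=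
            Real.rpow_le_rpow (by positivity) hcn (by positivity)
    have hbdd : Filter.IsBoundedUnder (· ≤ ·) Filter.atTop
        (fun n : ℕ => d n ^ ((1 : ℝ) / n)) := by
      refine Filter.isBoundedUnder_of ⟨1, fun m => ?_⟩
      exact Real.rpow_le_one (distInt_nonneg _) (by linarith [hdh m]) (by positivity)
    calc (0 : ℝ) < c := hcpos
      _ ≤ Filter.liminf (fun n : ℕ => d n ^ ((1 : ℝ) / n)) Filter.atTop :=
        Filter.le_liminf_of_le hbdd.isCobounded_ge hev2
  tfae_have 3 → 1 := by
    intro h3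
    set L := Filter.liminf (fun n : ℕ => d n ^ ((1 : ℝ) / n)) Filter.atTop with hL
    have hbdd : Filter.IsBoundedUnder (· ≥ ·) Filter.atTop
        (fun n : ℕ => d n ^ ((1 : ℝ) / n)) :=
      Filter.isBoundedUnder_of ⟨0, fun m => Real.rpow_nonneg (distInt_nonneg _) _⟩
    have hhalf : L / 2 < L := by linarith
    have hev := Filter.eventually_lt_of_lt_liminf (u := fun n : ℕ => d n ^ ((1 : ℝ) / n))
      hhalf hbdd
    set c : ℝ := L / 2 with hc
    have hcpos : 0 < c := by positivity
    rw [Filter.eventually_atTop] at hev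
    obtain ⟨N0, hN0⟩ := hev
    set N := max N0 1 with hN
    have hdn : ∀ n ≥ N, c ^ n ≤ d n := by
      intro n hn
      have hn1 : 1 ≤ n := le_trans (le_max_right _ _) hn
      have hnpos : (0 : ℝ) < n := by exact_mod_cast hn1
      have h := hN0 n (le_trans (le_max_left _ _) hn)
      have : c ^ n ≤ (d n ^ ((1 : ℝ) / n)) ^ n := pow_le_pow_left₀ hcpos.le h.le n
      calc c ^ n ≤ (d n ^ ((1 : ℝ) / n)) ^ n := this
        _ = d n := by
          rw [← Real.rpow_natCast (d n ^ ((1:ℝ)/n)) n, ← Real.rpow_mul (distInt_nonneg _),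
            one_div, inv_mul_cancel₀ hnpos.ne', Real.rpow_one]
    set C : ℝ := 1 / 4 + ∑ i ∈ Finset.range N, c ^ i / a i with hC
    have hterm : ∀ i, 0 ≤ c ^ i / a i := fun i => by positivity
    have hbound : ∀ n : ℕ, ‖(1 - q ^ n * lam)⁻¹‖ * ((c.toNNReal : ℝ)) ^ n ≤ C := by
      intro n
      rw [hnorm n, Real.coe_toNNReal c hcpos.le]
      have : (a n)⁻¹ * c ^ n = c ^ n / a n := by rw [div_eq_inv_mul]
      rw [this]
      rcases lt_or_ge n N with h | h
      · calc c ^ n / a n ≤ ∑ i ∈ Finset.range N, c ^ i / a i :=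
            Finset.single_le_sum (fun i _ => hterm i) (Finset.mem_range.mpr h)
          _ ≤ C := by rw [hC]; linarith
      · have h4 : 4 * c ^ n ≤ a n := le_trans (by nlinarith [hdn n h]) (hlb n)
        have : c ^ n / a n ≤ 1 / 4 := by
          rw [div_le_div_iff₀ (ha0 n) (by norm_num)]
          linarith
        calc c ^ n / a n ≤ 1 / 4 := this
          _ ≤ C := by
            rw [hC]
            have : 0 ≤ ∑ i ∈ Finset.range N, c ^ i / a i :=
              Finset.sum_nonneg fun i _ => hterm i
            linarith
    have : (c.toNNReal : ENNReal) ≤ radiusOfConv (fun n => (1 - q ^ n * lam)⁻¹) := by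
      rw [radiusOfConv]
      exact le_iSup_of_le c.toNNReal (le_iSup_of_le C (le_iSup_of_le hbound le_rfl))
    refine lt_of_lt_of_le ?_ this
    exact_mod_cast ENNReal.coe_pos.mpr (Real.toNNReal_pos.mpr hcpos)
  tfae_finish
end

section
/- There exists a universal constant C₀ > 0 with the following property: for every irrational ω ∈ (0,1) such that the Brjuno sum B(ω) = Σ_{n≥0} (log q_{n+1})/q_n is finite, where q_n are the denominators of the convergents of the continued fraction expansion of ω, the power series Σ_{n≥0} x^n/(q;q)_n with q = exp(2πiω) has radius of convergence at least exp(−B(ω) − C₀); in particular this radius is positive. -/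
open scoped BigOperators

/-- The denominators of the convergents of the continued fraction expansion of `ω`. -/
noncomputable def cfDen (ω : ℝ) (n : ℕ) : ℝ := (GenContFract.of ω).dens n


/-- Counting lemma: a set of naturals all `≥ d`, all `≤ n`, with pairwise gaps `≥ d`,
has at most `n / d` elements. -/
lemma sparse_card {d : ℕ} :
    ∀ (A : Finset ℕ), (∀ a ∈ A, d ≤ a) → (∀ a ∈ A, ∀ b ∈ A, a < b → a + d ≤ b) →
      ∀ n : ℕ, (∀ a ∈ A, a ≤ n) → A.card * d ≤ n := by
  intro A
  induction A using Finset.induction_on_max with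
  | empty => intro _ _ n _; simp
  | insert a s hlt ih =>
    intro hd hgap n hub
    have has : a ∉ s := fun h => lt_irrefl a (hlt a h)
    have hda : d ≤ a := hd a (Finset.mem_insert_self a s)
    have han : a ≤ n := hub a (Finset.mem_insert_self a s)
    have hs : s.card * d ≤ a - d := by
      apply ih
      · intro b hb; exact hd b (Finset.mem_insert_of_mem hb)
      · intro b hb c hc hbc
        exact hgap b (Finset.mem_insert_of_mem hb) c (Finset.mem_insert_of_mem hc) hbc
      · intro b hb
        have := hgap b (Finset.mem_insert_of_mem hb) a (Finset.mem_insert_self a s) (hlt b hb)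
        omega
    rw [Finset.card_insert_of_notMem has]
    have h2 : (s.card + 1) * d = s.card * d + d := by ring
    omega

/-- `‖1 - exp(2πi x)‖ = 2 |sin (π x)|`. -/
lemma norm_one_sub_exp (x : ℝ) :
    ‖(1 : ℂ) - Complex.exp (2 * Real.pi * Complex.I * x)‖ = 2 * |Real.sin (Real.pi * x)| := by
  have h1 : (2 * Real.pi * Complex.I * x) = ((2 * Real.pi * x : ℝ) : ℂ) * Complex.I := by
    push_cast; ring
  rw [h1, Complex.exp_mul_I]
  have hcos : Complex.cos ((2 * Real.pi * x : ℝ) : ℂ) = ((Real.cos (2 * Real.pi * x) : ℝ) : ℂ) := by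
    rw [Complex.ofReal_cos]
  have hsin : Complex.sin ((2 * Real.pi * x : ℝ) : ℂ) = ((Real.sin (2 * Real.pi * x) : ℝ) : ℂ) := by
    rw [Complex.ofReal_sin]
  rw [hcos, hsin]
  have hsq : ‖(1 : ℂ) - (((Real.cos (2 * Real.pi * x) : ℝ) : ℂ) +
      ((Real.sin (2 * Real.pi * x) : ℝ) : ℂ) * Complex.I)‖ ^ 2
      = (2 * |Real.sin (Real.pi * x)|) ^ 2 := by
    rw [Complex.sq_norm, Complex.normSq_apply]
    simp only [Complex.sub_re, Complex.sub_im, Complex.one_re, Complex.one_im, Complex.add_re,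
      Complex.add_im, Complex.ofReal_re, Complex.ofReal_im, Complex.mul_re, Complex.mul_im,
      Complex.I_re, Complex.I_im]
    have h3 := Real.cos_two_mul' (Real.pi * x)
    have h4 := Real.sin_sq_add_cos_sq (Real.pi * x)
    have h2 : Real.cos (2 * Real.pi * x) = 1 - 2 * Real.sin (Real.pi * x) ^ 2 := by
      have he : (2 : ℝ) * Real.pi * x = 2 * (Real.pi * x) := by ring
      rw [he, h3]; nlinarith [h4]
    have hsin2 : Real.sin (2 * Real.pi * x) = 2 * Real.sin (Real.pi * x) * Real.cos (Real.pi * x) := by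
      have he : (2 : ℝ) * Real.pi * x = 2 * (Real.pi * x) := by ring
      rw [he, Real.sin_two_mul]
    have habs : |Real.sin (Real.pi * x)| ^ 2 = Real.sin (Real.pi * x) ^ 2 := sq_abs _
    rw [h2, hsin2]
    nlinarith [h4, habs]
  have h5 : (0:ℝ) ≤ ‖(1 : ℂ) - (((Real.cos (2 * Real.pi * x) : ℝ) : ℂ) +
      ((Real.sin (2 * Real.pi * x) : ℝ) : ℂ) * Complex.I)‖ := norm_nonneg _
  have h6 : (0:ℝ) ≤ 2 * |Real.sin (Real.pi * x)| := by positivity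
  nlinarith [hsq]

/-- Jordan: for `|t| ≤ 1/2`, `2|sin(π t)| ≥ 4 |t|`. -/
lemma four_abs_le_norm_sin {t : ℝ} (ht : |t| ≤ 1/2) : 4 * |t| ≤ 2 * |Real.sin (Real.pi * t)| := by
  have hpi := Real.pi_pos
  have h0 : 0 ≤ |t| := abs_nonneg t
  have h1 : Real.pi * |t| ≤ Real.pi / 2 := by nlinarith
  have h2 : 2 / Real.pi * (Real.pi * |t|) ≤ Real.sin (Real.pi * |t|) :=
    Real.mul_le_sin (by positivity) h1
  have h3 : Real.sin (Real.pi * |t|) = |Real.sin (Real.pi * t)| := by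
    rcases abs_cases t with ⟨he, _⟩ | ⟨he, hneg⟩
    · rw [he]
      rw [abs_of_nonneg]
      apply Real.sin_nonneg_of_nonneg_of_le_pi (by positivity)
      nlinarith
    · have h7 : 0 ≤ Real.sin (Real.pi * (-t)) := by
        apply Real.sin_nonneg_of_nonneg_of_le_pi
        · nlinarith
        · nlinarith [abs_nonneg t, neg_abs_le t, le_abs_self t]
      have h8 : Real.sin (Real.pi * t) ≤ 0 := by
        have : Real.pi * t = -(Real.pi * (-t)) := by ring
        rw [this, Real.sin_neg]; linarith
      rw [he, mul_neg, Real.sin_neg, abs_of_nonpos h8]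
  have h4 : 2 / Real.pi * (Real.pi * |t|) = 2 * |t| := by field_simp
  rw [h3, h4] at h2
  linarith

noncomputable def cfNum (ω : ℝ) (n : ℕ) : ℝ := (GenContFract.of ω).nums n

lemma exists_int_contsAux (ω : ℝ) : ∀ n : ℕ,
    (∃ p : ℤ, ((GenContFract.of ω).contsAux n).a = (p : ℝ)) ∧
      (∃ q : ℤ, ((GenContFract.of ω).contsAux n).b = (q : ℝ)) := by
  have base0 : (GenContFract.of ω).contsAux 0 = ⟨1, 0⟩ := rfl
  have base1 : (GenContFract.of ω).contsAux 1 = ⟨(GenContFract.of ω).h, 1⟩ := rfl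
  intro n
  induction n using Nat.strong_induction_on with
  | _ n ih =>
    match n with
    | 0 => refine ⟨⟨1, ?_⟩, ⟨0, ?_⟩⟩ <;> simp [base0]
    | 1 =>
      refine ⟨⟨⌊ω⌋, ?_⟩, ⟨1, ?_⟩⟩ <;> simp [base1, GenContFract.of_h_eq_floor]
    | (n + 2) =>
      obtain ⟨⟨pp, hpp⟩, ⟨qq, hqq⟩⟩ := ih n (by omega)
      obtain ⟨⟨pp1, hpp1⟩, ⟨qq1, hqq1⟩⟩ := ih (n + 1) (by omega)
      rcases Option.eq_none_or_eq_some ((GenContFract.of ω).s.get? n) with hnone | ⟨gp, hgp⟩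
      · have : (GenContFract.of ω).contsAux (n + 2) = (GenContFract.of ω).contsAux (n + 1) :=
          GenContFract.contsAux_stable_step_of_terminated hnone
        rw [this]
        exact ⟨⟨pp1, hpp1⟩, ⟨qq1, hqq1⟩⟩
      · obtain ⟨ha, ⟨z, hz⟩⟩ := GenContFract.of_partNum_eq_one_and_exists_int_partDen_eq hgp
        have hrec := GenContFract.contsAux_recurrence hgp rfl rfl
        rw [hrec]
        refine ⟨⟨z * pp1 + pp, ?_⟩, ⟨z * qq1 + qq, ?_⟩⟩ <;>
          simp [ha, hz, hpp, hpp1, hqq, hqq1] <;> push_cast <;> ring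

lemma exists_int_num (ω : ℝ) (n : ℕ) : ∃ p : ℤ, cfNum ω n = (p : ℝ) := by
  have h := (exists_int_contsAux ω (n + 1)).1
  rwa [show cfNum ω n = ((GenContFract.of ω).contsAux (n+1)).a from rfl]

lemma exists_int_den (ω : ℝ) (n : ℕ) : ∃ q : ℤ, cfDen ω n = (q : ℝ) := by
  have h := (exists_int_contsAux ω (n + 1)).2
  rwa [show cfDen ω n = ((GenContFract.of ω).contsAux (n+1)).b from rfl]

noncomputable def pZ (ω : ℝ) (n : ℕ) : ℤ := round (cfNum ω n)
noncomputable def qZ (ω : ℝ) (n : ℕ) : ℤ := round (cfDen ω n)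

lemma pZ_cast (ω : ℝ) (n : ℕ) : ((pZ ω n : ℤ) : ℝ) = cfNum ω n := by
  obtain ⟨p, hp⟩ := exists_int_num ω n
  rw [pZ, hp, round_intCast]

lemma qZ_cast (ω : ℝ) (n : ℕ) : ((qZ ω n : ℤ) : ℝ) = cfDen ω n := by
  obtain ⟨q, hq⟩ := exists_int_den ω n
  rw [qZ, hq, round_intCast]

section Irr
variable {ω : ℝ}

lemma notTerm (hω : Irrational ω) (n : ℕ) : ¬(GenContFract.of ω).TerminatedAt n := by
  intro hn
  obtain ⟨q, hq⟩ := (GenContFract.terminates_iff_rat ω).1 ⟨n, hn⟩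
  exact hω ⟨q, hq.symm⟩

lemma den_one_le (hω : Irrational ω) (n : ℕ) : (1 : ℝ) ≤ cfDen ω n := by
  have h := GenContFract.succ_nth_fib_le_of_nth_den (v := ω) (n := n) (Or.inr (notTerm hω _))
  have : (1 : ℕ) ≤ Nat.fib (n + 1) := Nat.fib_pos.mpr (Nat.succ_pos n)
  calc (1:ℝ) ≤ (Nat.fib (n+1) : ℝ) := by exact_mod_cast this
  _ ≤ _ := h

lemma den_pos (hω : Irrational ω) (n : ℕ) : (0 : ℝ) < cfDen ω n := lt_of_lt_of_le one_pos (den_one_le hω n)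

lemma den_mono (n : ℕ) : cfDen ω n ≤ cfDen ω (n + 1) := GenContFract.of_den_mono

lemma den_add_le (hω : Irrational ω) (n : ℕ) : cfDen ω n + cfDen ω (n + 1) ≤ cfDen ω (n + 2) := by
  obtain ⟨gp, hgp⟩ : ∃ gp, (GenContFract.of ω).s.get? (n+1) = some gp :=
    Option.ne_none_iff_exists'.1 (notTerm hω (n+1))
  have hrec := GenContFract.dens_recurrence hgp rfl rfl
  have hb : 1 ≤ gp.b := GenContFract.of_one_le_get?_partDen (GenContFract.partDen_eq_s_b hgp)
  have h1 := den_one_le hω (n + 1)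
  show cfDen ω n + cfDen ω (n+1) ≤ (GenContFract.of ω).dens (n+2)
  rw [hrec]
  have ha : gp.a = 1 := GenContFract.of_partNum_eq_one (GenContFract.partNum_eq_s_a hgp)
  have e1 : cfDen ω n = (GenContFract.of ω).dens n := rfl
  have e2 : cfDen ω (n+1) = (GenContFract.of ω).dens (n+1) := rfl
  rw [ha, ← e1, ← e2]
  have : (0:ℝ) < cfDen ω (n+1) := den_pos hω (n+1)
  nlinarith

lemma approx (hω : Irrational ω) (n : ℕ) :
    |cfDen ω n * ω - cfNum ω n| ≤ 1 / cfDen ω (n + 1) := by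
  have h := GenContFract.abs_sub_convs_le (v := ω) (n := n) (notTerm hω n)
  rw [GenContFract.conv_eq_num_div_den] at h
  have hd : (0:ℝ) < cfDen ω n := den_pos hω n
  have hd1 : (0:ℝ) < cfDen ω (n+1) := den_pos hω (n+1)
  have e : cfDen ω n * ω - cfNum ω n =
      cfDen ω n * (ω - (GenContFract.of ω).nums n / (GenContFract.of ω).dens n) := by
    show cfDen ω n * ω - cfNum ω n = cfDen ω n * (ω - cfNum ω n / cfDen ω n)
    field_simp
  rw [e, abs_mul, abs_of_pos hd]
  calc cfDen ω n * |ω - (GenContFract.of ω).nums n / (GenContFract.of ω).dens n|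
      ≤ cfDen ω n * (1 / ((GenContFract.of ω).dens n * (GenContFract.of ω).dens (n+1))) := by
        exact mul_le_mul_of_nonneg_left h (le_of_lt hd)
    _ = 1 / cfDen ω (n + 1) := by
        show cfDen ω n * (1 / (cfDen ω n * cfDen ω (n+1))) = 1 / cfDen ω (n+1)
        field_simp

lemma det (hω : Irrational ω) (n : ℕ) :
    cfNum ω n * cfDen ω (n + 1) - cfDen ω n * cfNum ω (n + 1) = (-1 : ℝ) ^ (n + 1) := by
  have h := SimpContFract.determinant (K := ℝ)
    (s := ⟨GenContFract.of ω, GenContFract.of_isSimpContFract ω⟩) (n := n) (notTerm hω n)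
  exact h

lemma detZ (hω : Irrational ω) (n : ℕ) :
    pZ ω n * qZ ω (n + 1) - qZ ω n * pZ ω (n + 1) = (-1 : ℤ) ^ (n + 1) := by
  have h := det hω n
  have := pZ_cast ω n; have := pZ_cast ω (n+1); have := qZ_cast ω n; have := qZ_cast ω (n+1)
  apply @Int.cast_injective ℝ
  push_cast
  rw [pZ_cast, pZ_cast, qZ_cast, qZ_cast]
  exact h

lemma delta_ne (hω : Irrational ω) (n : ℕ) : cfDen ω n * ω - cfNum ω n ≠ 0 := by
  intro h
  have hd : (0:ℝ) < cfDen ω n := den_pos hω n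
  have hq1 : ((qZ ω n : ℤ) : ℝ) ≠ 0 := by rw [qZ_cast]; exact ne_of_gt hd
  apply hω
  refine ⟨(pZ ω n : ℚ) / (qZ ω n : ℚ), ?_⟩
  show (((pZ ω n : ℚ) / (qZ ω n : ℚ) : ℚ) : ℝ) = ω
  push_cast
  rw [pZ_cast, qZ_cast]
  rw [div_eq_iff (ne_of_gt hd)]
  linarith [h]

lemma AB_diff (hω : Irrational ω) (n : ℕ) :
    cfDen ω n * (cfDen ω (n+1) * ω - cfNum ω (n+1))
      - cfDen ω (n+1) * (cfDen ω n * ω - cfNum ω n) = (-1 : ℝ) ^ (n+1) := by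
  have h := det hω n
  nlinarith [h]

lemma opp (hω : Irrational ω) (n : ℕ) :
    (cfDen ω n * ω - cfNum ω n) * (cfDen ω (n+1) * ω - cfNum ω (n+1)) < 0 := by
  set δ0 := cfDen ω n * ω - cfNum ω n with hδ0
  set δ1 := cfDen ω (n+1) * ω - cfNum ω (n+1) with hδ1
  have hne0 : δ0 ≠ 0 := delta_ne hω n
  have hne1 : δ1 ≠ 0 := delta_ne hω (n+1)
  by_contra hcon
  push_neg at hcon
  have hprod : 0 < δ0 * δ1 := lt_of_le_of_ne hcon (by
    intro h; rcases mul_eq_zero.1 h.symm with h | h; exact hne0 h; exact hne1 h)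
  have hdiff := AB_diff hω n
  have hd0 : (0:ℝ) < cfDen ω n := den_pos hω n
  have hd1 : (0:ℝ) < cfDen ω (n+1) := den_pos hω (n+1)
  have hd2 : (0:ℝ) < cfDen ω (n+2) := den_pos hω (n+2)
  have hm1 : cfDen ω n ≤ cfDen ω (n+1) := den_mono n
  have hm2 : cfDen ω (n+1) ≤ cfDen ω (n+2) := den_mono (n+1)
  have ha1 : |δ1| ≤ 1 / cfDen ω (n+2) := approx hω (n+1)
  have ha0 : |δ0| ≤ 1 / cfDen ω (n+1) := approx hω n
  have hA : |cfDen ω n * δ1| ≤ 1 := by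
    rw [abs_mul, abs_of_pos hd0]
    calc cfDen ω n * |δ1| ≤ cfDen ω n * (1 / cfDen ω (n+2)) :=
          mul_le_mul_of_nonneg_left ha1 (le_of_lt hd0)
      _ ≤ 1 := by rw [mul_one_div, div_le_one hd2]; linarith
  have hB : |cfDen ω (n+1) * δ0| ≤ 1 := by
    rw [abs_mul, abs_of_pos hd1]
    calc cfDen ω (n+1) * |δ0| ≤ cfDen ω (n+1) * (1 / cfDen ω (n+1)) :=
          mul_le_mul_of_nonneg_left ha0 (le_of_lt hd1)
      _ = 1 := by field_simp
  have hsame : 0 < (cfDen ω n * δ1) * (cfDen ω (n+1) * δ0) := by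
    have : (cfDen ω n * δ1) * (cfDen ω (n+1) * δ0)
        = (cfDen ω n * cfDen ω (n+1)) * (δ0 * δ1) := by ring
    rw [this]
    exact mul_pos (mul_pos hd0 hd1) hprod
  rcases neg_one_pow_eq_or ℝ (n+1) with hsgn | hsgn <;>
    rw [hsgn] at hdiff <;>
    nlinarith [abs_le.1 hA, abs_le.1 hB, hsame, hdiff]

lemma beta_lb (hω : Irrational ω) (n : ℕ) :
    1 / (2 * cfDen ω (n+1)) ≤ |cfDen ω n * ω - cfNum ω n| := by
  set δ0 := cfDen ω n * ω - cfNum ω n with hδ0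
  set δ1 := cfDen ω (n+1) * ω - cfNum ω (n+1) with hδ1
  have hdiff := AB_diff hω n
  have hd0 : (0:ℝ) < cfDen ω n := den_pos hω n
  have hd1 : (0:ℝ) < cfDen ω (n+1) := den_pos hω (n+1)
  have hd2 : (0:ℝ) < cfDen ω (n+2) := den_pos hω (n+2)
  have hm1 : cfDen ω n ≤ cfDen ω (n+1) := den_mono n
  have hadd : cfDen ω n + cfDen ω (n+1) ≤ cfDen ω (n+2) := den_add_le hω n
  have ha1 : |δ1| ≤ 1 / cfDen ω (n+2) := approx hω (n+1)
  have h1 : (1:ℝ) ≤ cfDen ω n * |δ1| + cfDen ω (n+1) * |δ0| := by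
    have habs : |cfDen ω n * δ1 - cfDen ω (n+1) * δ0| = 1 := by
      rw [hdiff]
      rcases neg_one_pow_eq_or ℝ (n+1) with hsgn | hsgn <;> rw [hsgn] <;> simp
    calc (1:ℝ) = |cfDen ω n * δ1 - cfDen ω (n+1) * δ0| := habs.symm
      _ ≤ |cfDen ω n * δ1| + |cfDen ω (n+1) * δ0| := abs_sub _ _
      _ = cfDen ω n * |δ1| + cfDen ω (n+1) * |δ0| := by
          rw [abs_mul, abs_mul, abs_of_pos hd0, abs_of_pos hd1]
  have k1 : cfDen ω n * |δ1| ≤ 1/2 := by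
    have h2 : |δ1| * cfDen ω (n+2) ≤ 1 := by
      rw [← le_div_iff₀ hd2]; exact ha1
    nlinarith [mul_le_mul_of_nonneg_left h2 (le_of_lt hd0), abs_nonneg δ1]
  rw [div_le_iff₀ (by positivity)]
  nlinarith [h1, k1]

lemma qZ_one_le (hω : Irrational ω) (n : ℕ) : (1 : ℤ) ≤ qZ ω n := by
  have := den_one_le hω n
  rw [← qZ_cast ω n] at this
  exact_mod_cast this

lemma bestApprox (hω : Irrational ω) (m : ℕ) (k : ℕ) (hk1 : 1 ≤ k)
    (hk2 : (k : ℝ) < cfDen ω (m + 1)) (p : ℤ) :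
    |cfDen ω m * ω - cfNum ω m| ≤ |(k : ℝ) * ω - (p : ℝ)| := by
  set δ0 := cfDen ω m * ω - cfNum ω m with hδ0
  set δ1 := cfDen ω (m+1) * ω - cfNum ω (m+1) with hδ1
  have hdet := detZ hω m
  set ε : ℤ := (-1) ^ (m + 1) with hε
  have hε2 : ε * ε = 1 := by
    rcases neg_one_pow_eq_or ℤ (m+1) with h | h <;> rw [hε, h] <;> ring
  set x : ℤ := ε * ((p : ℤ) * qZ ω (m+1) - (k : ℤ) * pZ ω (m+1)) with hx
  set y : ℤ := ε * (pZ ω m * (k : ℤ) - qZ ω m * (p : ℤ)) with hy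
  have hxq : x * qZ ω m + y * qZ ω (m+1) = (k : ℤ) := by
    rw [hx, hy]
    linear_combination (ε * (k:ℤ)) * hdet + (k:ℤ) * hε2
  have hxp : x * pZ ω m + y * pZ ω (m+1) = (p : ℤ) := by
    rw [hx, hy]
    linear_combination (ε * (p:ℤ)) * hdet + (p:ℤ) * hε2
  have hreal : (k : ℝ) * ω - (p : ℝ) = (x : ℝ) * δ0 + (y : ℝ) * δ1 := by
    have e1 : ((x * qZ ω m + y * qZ ω (m+1) : ℤ) : ℝ) = (k : ℝ) := by rw [hxq]; norm_cast
    have e2 : ((x * pZ ω m + y * pZ ω (m+1) : ℤ) : ℝ) = (p : ℝ) := by rw [hxp]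
    push_cast at e1 e2
    rw [qZ_cast, qZ_cast] at e1
    rw [pZ_cast, pZ_cast] at e2
    rw [hδ0, hδ1, ← e1, ← e2]
    ring
  have hq0 : (1:ℤ) ≤ qZ ω m := qZ_one_le hω m
  have hq1 : (1:ℤ) ≤ qZ ω (m+1) := qZ_one_le hω (m+1)
  have hkq1 : (k : ℤ) < qZ ω (m+1) := by
    have := hk2
    rw [← qZ_cast ω (m+1)] at this
    exact_mod_cast this
  rw [hreal]
  by_cases hy0 : y = 0
  · -- k = x * qm, so |x| ≥ 1
    have hx0 : x ≠ 0 := by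
      intro h0
      rw [h0, hy0] at hxq
      simp at hxq
      omega
    have hx1 : (1:ℝ) ≤ |(x:ℝ)| := by
      have : (1:ℤ) ≤ |x| := Int.one_le_abs hx0
      calc (1:ℝ) ≤ ((|x| : ℤ) : ℝ) := by exact_mod_cast this
        _ = |(x:ℝ)| := by push_cast; rfl
    rw [hy0]
    push_cast
    rw [zero_mul, add_zero, abs_mul]
    nlinarith [abs_nonneg δ0, hx1, abs_nonneg ((x:ℝ))]
  · by_cases hx0 : x = 0
    · exfalso
      rw [hx0, zero_mul, zero_add] at hxq
      -- k = y * q_{m+1} with 1 ≤ k < q_{m+1} : impossible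
      rcases lt_trichotomy y 0 with h | h | h
      · nlinarith [hxq, hq1, hk1]
      · exact hy0 h
      · nlinarith [hxq, hq1, hkq1]
    · -- both nonzero: x and y have opposite signs
      have hxy : x * y < 0 := by
        rcases lt_trichotomy y 0 with h | h | h
        · -- y < 0 : x * qm = k - y * q1 ≥ k + q1 > 0 so x > 0
          have hxpos : 0 < x := by nlinarith [hxq, hq1, hk1, hq0]
          nlinarith
        · exact absurd h hy0
        · -- y > 0 : x * qm = k - y*q1 ≤ k - q1 < 0 so x < 0
          have hxneg : x < 0 := by nlinarith [hxq, hkq1, hq0]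
          nlinarith
      have hopp : δ0 * δ1 < 0 := opp hω m
      have hsame : 0 < ((x:ℝ) * δ0) * ((y:ℝ) * δ1) := by
        have hxyR : ((x * y : ℤ) : ℝ) < 0 := by exact_mod_cast hxy
        push_cast at hxyR
        nlinarith [hxyR, hopp]
      have hx1 : (1:ℝ) ≤ |(x:ℝ)| := by
        have : (1:ℤ) ≤ |x| := Int.one_le_abs hx0
        calc (1:ℝ) ≤ ((|x| : ℤ) : ℝ) := by exact_mod_cast this
          _ = |(x:ℝ)| := by push_cast; rfl
      have habs : |(x:ℝ) * δ0| ≤ |(x:ℝ) * δ0 + (y:ℝ) * δ1| := by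
        rcases lt_or_ge 0 ((x:ℝ) * δ0) with hpos | hneg
        · have hypos : 0 < (y:ℝ) * δ1 := by nlinarith [hsame]
          rw [abs_of_pos hpos, abs_of_pos (by linarith : (0:ℝ) < (x:ℝ)*δ0 + (y:ℝ)*δ1)]
          linarith
        · have hxne : (x:ℝ) * δ0 ≠ 0 := by
            intro h0; rw [h0] at hsame; simp at hsame
          have hxneg : (x:ℝ) * δ0 < 0 := lt_of_le_of_ne hneg hxne
          have hyneg : (y:ℝ) * δ1 < 0 := by nlinarith [hsame]
          rw [abs_of_neg hxneg, abs_of_neg (by linarith : (x:ℝ)*δ0 + (y:ℝ)*δ1 < 0)]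
          linarith
      calc |δ0| ≤ |(x:ℝ)| * |δ0| := by nlinarith [abs_nonneg δ0, hx1]
        _ = |(x:ℝ) * δ0| := (abs_mul _ _).symm
        _ ≤ _ := habs

end Irr

noncomputable def Ef (ω : ℝ) (k : ℕ) : ℝ := |(k:ℝ) * ω - (round ((k:ℝ) * ω) : ℤ)|

section Irr2
variable {ω : ℝ}

lemma Ef_nonneg (k : ℕ) : 0 ≤ Ef ω k := abs_nonneg _

lemma Ef_le (k : ℕ) (p : ℤ) : Ef ω k ≤ |(k:ℝ) * ω - (p : ℝ)| := round_le _ p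

lemma Ef_pos (hω : Irrational ω) (k : ℕ) (hk : 1 ≤ k) : 0 < Ef ω k := by
  rcases lt_or_eq_of_le (Ef_nonneg (ω := ω) k) with h | h
  · exact h
  exfalso
  have h0 : (k:ℝ) * ω - (round ((k:ℝ) * ω) : ℤ) = 0 := by
    have := abs_eq_zero.1 h.symm
    exact this
  have hkR : ((k:ℕ) : ℝ) ≠ 0 := by
    simp only [ne_eq, Nat.cast_eq_zero]
    omega
  apply hω
  refine ⟨((round ((k:ℝ) * ω) : ℤ) : ℚ) / (k : ℚ), ?_⟩
  push_cast
  rw [div_eq_iff hkR]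
  linarith [h0]

lemma den_ge_nat (hω : Irrational ω) : ∀ m : ℕ, (m : ℝ) ≤ cfDen ω m := by
  intro m
  induction m using Nat.strong_induction_on with
  | _ m ih =>
    match m with
    | 0 => simp [den_pos hω 0, le_of_lt (den_pos hω 0)]
    | 1 => simpa using den_one_le hω 1
    | (m + 2) =>
      have h1 := ih (m + 1) (by omega)
      have h2 := den_one_le hω m
      have h3 := den_add_le hω m
      push_cast at h1 ⊢
      linarith

open scoped Classical in
noncomputable def lev (ω : ℝ) (k : ℕ) : ℕ :=
  if h : ∃ m, |cfDen ω m * ω - cfNum ω m| ≤ 2 * Ef ω k then Nat.find h else 0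

lemma lev_exists (hω : Irrational ω) (k : ℕ) (hk : 1 ≤ k) :
    ∃ m, |cfDen ω m * ω - cfNum ω m| ≤ 2 * Ef ω k := by
  obtain ⟨N, hN⟩ := exists_nat_gt (1 / (2 * Ef ω k))
  refine ⟨N, ?_⟩
  have hE := Ef_pos hω k hk
  have hdN : (0:ℝ) < cfDen ω (N+1) := den_pos hω (N+1)
  have hge : ((N:ℝ)+1) ≤ cfDen ω (N+1) := by
    have := den_ge_nat hω (N+1); push_cast at this; linarith
  calc |cfDen ω N * ω - cfNum ω N| ≤ 1 / cfDen ω (N+1) := approx hω N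
    _ ≤ 1 / ((N:ℝ)+1) := by
        apply div_le_div_of_nonneg_left one_pos.le (by linarith) hge
    _ ≤ 2 * Ef ω k := by
        rw [div_le_iff₀ (by linarith : (0:ℝ) < (N:ℝ)+1)]
        rw [div_lt_iff₀ (by positivity : (0:ℝ) < 2 * Ef ω k)] at hN
        nlinarith [hE]

open scoped Classical in
lemma lev_eq_find (hω : Irrational ω) (k : ℕ) (hk : 1 ≤ k) :
    lev ω k = Nat.find (lev_exists hω k hk) := by
  rw [lev, dif_pos (lev_exists hω k hk)]

lemma lev_spec (hω : Irrational ω) (k : ℕ) (hk : 1 ≤ k) :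
    |cfDen ω (lev ω k) * ω - cfNum ω (lev ω k)| ≤ 2 * Ef ω k := by
  rw [lev_eq_find hω k hk]
  exact Nat.find_spec (lev_exists hω k hk)

lemma lev_min (hω : Irrational ω) (k : ℕ) (hk : 1 ≤ k) {j : ℕ} (hj : j < lev ω k) :
    2 * Ef ω k < |cfDen ω j * ω - cfNum ω j| := by
  rw [lev_eq_find hω k hk] at hj
  have := Nat.find_min (lev_exists hω k hk) hj
  linarith [not_le.1 this]

lemma Ef_ge (hω : Irrational ω) (k : ℕ) (hk : 1 ≤ k) :
    1 / (4 * cfDen ω (lev ω k + 1)) ≤ Ef ω k := by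
  have h1 := lev_spec hω k hk
  have h2 := beta_lb hω (lev ω k)
  have hd : (0:ℝ) < cfDen ω (lev ω k + 1) := den_pos hω _
  have : 1 / (2 * cfDen ω (lev ω k + 1)) ≤ 2 * Ef ω k := le_trans h2 h1
  rw [div_le_iff₀ (by positivity)] at this
  rw [div_le_iff₀ (by positivity)]
  linarith

lemma lev_lb (hω : Irrational ω) (k : ℕ) (hk : 1 ≤ k) (hlev : 1 ≤ lev ω k) :
    cfDen ω (lev ω k) ≤ (k : ℝ) := by
  by_contra hcon
  push_neg at hcon
  set m := lev ω k with hm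
  have hmin := lev_min hω k hk (j := m - 1) (by omega)
  have hba := bestApprox hω (m - 1) k hk
    (by rw [show m - 1 + 1 = m from by omega]; exact hcon) (round ((k:ℝ) * ω))
  have hEge : Ef ω k = |(k:ℝ) * ω - (round ((k:ℝ) * ω) : ℤ)| := rfl
  rw [← hEge] at hba
  have hE := Ef_pos hω k hk
  linarith

lemma lev_gap (hω : Irrational ω) {k k' : ℕ} (hk : 1 ≤ k) (hkk : k < k')
    (hlev : lev ω k = lev ω k') (hl1 : 1 ≤ lev ω k) :
    cfDen ω (lev ω k) ≤ ((k' - k : ℕ) : ℝ) := by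
  by_contra hcon
  push_neg at hcon
  set m := lev ω k with hm
  have hk'1 : 1 ≤ k' := by omega
  have hd1 : 1 ≤ k' - k := by omega
  have hmin := lev_min hω k hk (j := m - 1) (by omega)
  have hmin' := lev_min hω k' hk'1 (j := m - 1) (by rw [← hlev]; omega)
  have hba := bestApprox hω (m - 1) (k' - k) hd1
    (by rw [show m - 1 + 1 = m from by omega]; exact hcon)
    (round ((k':ℝ) * ω) - round ((k:ℝ) * ω))
  have htri : |((k' - k : ℕ) : ℝ) * ω - ((round ((k':ℝ) * ω) - round ((k:ℝ) * ω) : ℤ) : ℝ)|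
      ≤ Ef ω k' + Ef ω k := by
    have hcast : ((k' - k : ℕ) : ℝ) = (k' : ℝ) - (k : ℝ) := by
      push_cast [Nat.cast_sub (le_of_lt hkk)]; ring
    rw [hcast]
    have : ((k':ℝ) - (k:ℝ)) * ω - ((round ((k':ℝ) * ω) - round ((k:ℝ) * ω) : ℤ) : ℝ)
        = ((k':ℝ) * ω - (round ((k':ℝ) * ω) : ℤ)) - ((k:ℝ) * ω - (round ((k:ℝ) * ω) : ℤ)) := by
      push_cast
      ring
    rw [this]
    calc |((k':ℝ) * ω - (round ((k':ℝ) * ω) : ℤ)) - ((k:ℝ) * ω - (round ((k:ℝ) * ω) : ℤ))|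
        ≤ |(k':ℝ) * ω - (round ((k':ℝ) * ω) : ℤ)| + |(k:ℝ) * ω - (round ((k:ℝ) * ω) : ℤ)| :=
          abs_sub _ _
      _ = Ef ω k' + Ef ω k := rfl
  have hE := Ef_pos hω k hk
  have hE' := Ef_pos hω k' hk'1
  linarith

lemma sum_inv_den (hω : Irrational ω) : ∀ N : ℕ, ∑ m ∈ Finset.range N, (cfDen ω m)⁻¹ ≤ 4 := by
  intro N
  induction N using Nat.strong_induction_on with
  | _ N ih =>
    match N with
    | 0 => simp
    | 1 =>
      simp only [Finset.sum_range_one]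
      have h0 : cfDen ω 0 = 1 := GenContFract.zeroth_den_eq_one
      rw [h0]; norm_num
    | (N + 2) =>
      set f := fun m => (cfDen ω m)⁻¹ with hf
      have e1 : ∑ m ∈ Finset.range (N+2), f m = (∑ i ∈ Finset.range (N+1), f (i+1)) + f 0 :=
        Finset.sum_range_succ' f (N+1)
      have e2 : ∑ i ∈ Finset.range (N+1), f (i+1) = (∑ i ∈ Finset.range N, f (i+2)) + f 1 :=
        Finset.sum_range_succ' (fun i => f (i+1)) N
      have hterm : ∀ i, f (i+2) ≤ (1/2) * f i := by
        intro i
        have hdi : (0:ℝ) < cfDen ω i := den_pos hω i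
        have h2d : 2 * cfDen ω i ≤ cfDen ω (i+2) := by
          have := den_add_le hω i
          have := den_mono (ω := ω) i
          linarith
        have : (cfDen ω (i+2))⁻¹ ≤ (2 * cfDen ω i)⁻¹ :=
          inv_anti₀ (by positivity) h2d
        calc f (i+2) ≤ (2 * cfDen ω i)⁻¹ := this
          _ = (1/2) * f i := by rw [mul_inv]; ring
      have hsum2 : ∑ i ∈ Finset.range N, f (i+2) ≤ (1/2) * ∑ i ∈ Finset.range N, f i := by
        rw [Finset.mul_sum]
        exact Finset.sum_le_sum (fun i _ => hterm i)
      have hIH := ih N (by omega)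
      have hf0 : f 0 = 1 := by
        show (cfDen ω 0)⁻¹ = 1
        rw [show cfDen ω 0 = 1 from GenContFract.zeroth_den_eq_one]; norm_num
      have hf1 : f 1 ≤ 1 := by
        show (cfDen ω 1)⁻¹ ≤ 1
        have := den_one_le hω 1
        rw [inv_le_one_iff₀]
        right; exact this
      rw [e1, e2]
      linarith

lemma key_sum (hω : Irrational ω)
    (hsum : Summable (fun m : ℕ => Real.log (cfDen ω (m + 1)) / cfDen ω m)) (n : ℕ) :
    ∑ k ∈ Finset.range n, Real.log ((Ef ω (k+1))⁻¹)
      ≤ n * ((∑' m : ℕ, Real.log (cfDen ω (m+1)) / cfDen ω m) + 4 * Real.log 4) := by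
  have hBnn : ∀ m : ℕ, 0 ≤ Real.log (cfDen ω (m+1)) / cfDen ω m := fun m =>
    div_nonneg (Real.log_nonneg (den_one_le hω (m+1))) (den_pos hω m).le
  have hmaps : ∀ k ∈ Finset.range n, lev ω (k+1) ∈ Finset.range (n+1) := by
    intro k hk
    rw [Finset.mem_range] at hk ⊢
    rcases Nat.eq_zero_or_pos (lev ω (k+1)) with h0 | hpos
    · omega
    · have h1 := lev_lb hω (k+1) (by omega) hpos
      have h2 := den_ge_nat hω (lev ω (k+1))
      have : ((lev ω (k+1) : ℕ) : ℝ) ≤ ((k+1 : ℕ) : ℝ) := by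
        push_cast at h1 h2 ⊢
        linarith
      have : lev ω (k+1) ≤ k + 1 := by exact_mod_cast this
      omega
  rw [← Finset.sum_fiberwise_of_maps_to hmaps (fun k => Real.log ((Ef ω (k+1))⁻¹))]
  have hcard : ∀ m ∈ Finset.range (n+1),
      (((Finset.range n).filter (fun k => lev ω (k+1) = m)).card : ℝ) ≤ (n : ℝ) / cfDen ω m := by
    intro m _
    set A := (Finset.range n).filter (fun k => lev ω (k+1) = m) with hA
    have hdm : (0:ℝ) < cfDen ω m := den_pos hω m
    rcases Nat.eq_zero_or_pos m with hm0 | hm1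
    · have h1 : A.card ≤ n := le_trans (Finset.card_filter_le _ _) (by rw [Finset.card_range])
      rw [hm0, show cfDen ω 0 = 1 from GenContFract.zeroth_den_eq_one, div_one]
      exact_mod_cast h1
    · set d := (qZ ω m).toNat with hd
      have hdcast : ((d : ℕ) : ℝ) = cfDen ω m := by
        rw [hd]
        have h1 := qZ_one_le hω m
        have : ((qZ ω m).toNat : ℤ) = qZ ω m := Int.toNat_of_nonneg (by omega)
        rw [show (((qZ ω m).toNat : ℕ) : ℝ) = (((qZ ω m).toNat : ℤ) : ℝ) by push_cast; ring,
          this, qZ_cast]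
      have hd1 : 1 ≤ d := by
        have h1 := qZ_one_le hω m
        rw [hd]
        omega
      set B := A.image (fun k => k + 1) with hB
      have hcardB : B.card = A.card := Finset.card_image_of_injective _ (add_left_injective 1)
      have hBmem : ∀ a ∈ B, ∃ k, k ∈ A ∧ a = k + 1 := by
        intro a ha
        rw [hB, Finset.mem_image] at ha
        obtain ⟨k, hk, hka⟩ := ha
        exact ⟨k, hk, hka.symm⟩
      have hlevmem : ∀ k, k ∈ A → k < n ∧ lev ω (k+1) = m := by
        intro k hk
        rw [hA, Finset.mem_filter, Finset.mem_range] at hk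
        exact hk
      have hsc := sparse_card (d := d) B ?_ ?_ n ?_
      · have : (B.card : ℝ) * ((d : ℕ) : ℝ) ≤ (n : ℝ) := by exact_mod_cast hsc
        rw [hcardB] at this
        rw [le_div_iff₀ hdm]
        rw [hdcast] at this
        exact this
      · intro a ha
        obtain ⟨k, hk, rfl⟩ := hBmem a ha
        obtain ⟨hkn, hklev⟩ := hlevmem k hk
        have h1 := lev_lb hω (k+1) (by omega) (by omega)
        rw [hklev] at h1
        have : ((d : ℕ) : ℝ) ≤ ((k + 1 : ℕ) : ℝ) := by rw [hdcast]; push_cast at h1 ⊢; linarith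
        exact_mod_cast this
      · intro a ha b hb hab
        obtain ⟨k, hk, rfl⟩ := hBmem a ha
        obtain ⟨k', hk', rfl⟩ := hBmem b hb
        obtain ⟨hkn, hklev⟩ := hlevmem k hk
        obtain ⟨hkn', hklev'⟩ := hlevmem k' hk'
        have hkk : k < k' := by omega
        have hgap := lev_gap hω (k := k+1) (k' := k'+1) (by omega) (by omega)
          (by rw [hklev, hklev']) (by omega)
        rw [hklev] at hgap
        have : ((d : ℕ) : ℝ) ≤ (((k'+1) - (k+1) : ℕ) : ℝ) := by rw [hdcast]; exact hgap
        have hdle : d ≤ (k'+1) - (k+1) := by exact_mod_cast this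
        omega
      · intro a ha
        obtain ⟨k, hk, rfl⟩ := hBmem a ha
        have := (hlevmem k hk).1
        omega
  calc ∑ m ∈ Finset.range (n+1), ∑ k ∈ (Finset.range n).filter (fun k => lev ω (k+1) = m),
        Real.log ((Ef ω (k+1))⁻¹)
      ≤ ∑ m ∈ Finset.range (n+1),
          ((n : ℝ) / cfDen ω m) * (Real.log 4 + Real.log (cfDen ω (m+1))) := by
        apply Finset.sum_le_sum
        intro m hm
        set A := (Finset.range n).filter (fun k => lev ω (k+1) = m) with hA
        have hdm1 : (0:ℝ) < cfDen ω (m+1) := den_pos hω (m+1)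
        have hlog4 : Real.log 4 + Real.log (cfDen ω (m+1)) = Real.log (4 * cfDen ω (m+1)) :=
          (Real.log_mul (by norm_num) (ne_of_gt hdm1)).symm
        have hlognn : 0 ≤ Real.log (4 * cfDen ω (m+1)) :=
          Real.log_nonneg (by nlinarith [den_one_le hω (m+1)])
        have hterm : ∀ k ∈ A, Real.log ((Ef ω (k+1))⁻¹) ≤ Real.log (4 * cfDen ω (m+1)) := by
          intro k hk
          rw [hA, Finset.mem_filter] at hk
          have hE := Ef_pos hω (k+1) (by omega)
          have hEge := Ef_ge hω (k+1) (by omega)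
          rw [hk.2] at hEge
          apply Real.log_le_log (by positivity)
          have h2 : (Ef ω (k+1))⁻¹ ≤ (1 / (4 * cfDen ω (m+1)))⁻¹ :=
            inv_anti₀ (by positivity) hEge
          calc (Ef ω (k+1))⁻¹ ≤ (1 / (4 * cfDen ω (m+1)))⁻¹ := h2
            _ = 4 * cfDen ω (m+1) := by rw [one_div, inv_inv]
        calc ∑ k ∈ A, Real.log ((Ef ω (k+1))⁻¹) ≤ A.card • Real.log (4 * cfDen ω (m+1)) :=
              Finset.sum_le_card_nsmul A _ _ hterm
          _ = (A.card : ℝ) * Real.log (4 * cfDen ω (m+1)) := nsmul_eq_mul _ _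
          _ ≤ ((n : ℝ) / cfDen ω m) * Real.log (4 * cfDen ω (m+1)) :=
              mul_le_mul_of_nonneg_right (hcard m hm) hlognn
          _ = ((n : ℝ) / cfDen ω m) * (Real.log 4 + Real.log (cfDen ω (m+1))) := by
              rw [hlog4]
      _ ≤ (n : ℝ) * ((∑' m : ℕ, Real.log (cfDen ω (m+1)) / cfDen ω m) + 4 * Real.log 4) := by
        set S1 := ∑ m ∈ Finset.range (n+1), (cfDen ω m)⁻¹ with hS1
        set S2 := ∑ m ∈ Finset.range (n+1), Real.log (cfDen ω (m+1)) / cfDen ω m with hS2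
        have heq : ∑ m ∈ Finset.range (n+1),
            ((n : ℝ) / cfDen ω m) * (Real.log 4 + Real.log (cfDen ω (m+1)))
            = (n : ℝ) * Real.log 4 * S1 + (n : ℝ) * S2 := by
          rw [hS1, hS2, Finset.mul_sum, Finset.mul_sum, ← Finset.sum_add_distrib]
          apply Finset.sum_congr rfl
          intro m _
          have hdm := (den_pos hω m).ne'
          field_simp
        rw [heq]
        have hs1 : S1 ≤ 4 := sum_inv_den hω (n+1)
        have hs2 : S2 ≤ ∑' m : ℕ, Real.log (cfDen ω (m+1)) / cfDen ω m :=
          Summable.sum_le_tsum (Finset.range (n+1)) (fun i _ => hBnn i) hsum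
        have hnn : (0:ℝ) ≤ (n:ℝ) := Nat.cast_nonneg n
        have hl4 : (0:ℝ) ≤ Real.log 4 := Real.log_nonneg (by norm_num)
        nlinarith [mul_nonneg hnn hl4, mul_le_mul_of_nonneg_left hs1 (mul_nonneg hnn hl4),
          mul_le_mul_of_nonneg_left hs2 hnn]

end Irr2

lemma norm_one_sub_exp_ge (x : ℝ) :
    4 * |x - (round x : ℤ)| ≤ ‖(1 : ℂ) - Complex.exp (2 * Real.pi * Complex.I * x)‖ := by
  rw [norm_one_sub_exp]
  set t := x - ((round x : ℤ) : ℝ) with ht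
  have hsin0 : Real.sin ((round x : ℤ) * Real.pi) = 0 := Real.sin_int_mul_pi (round x)
  have hcos1 : |Real.cos ((round x : ℤ) * Real.pi)| = 1 := by
    have h := Real.sin_sq_add_cos_sq ((round x : ℤ) * Real.pi)
    rw [hsin0] at h
    have : Real.cos ((round x : ℤ) * Real.pi) ^ 2 = 1 := by nlinarith
    rcases abs_cases (Real.cos ((round x : ℤ) * Real.pi)) with ⟨he, _⟩ | ⟨he, _⟩ <;>
      nlinarith [this]
  have habs : |Real.sin (Real.pi * x)| = |Real.sin (Real.pi * t)| := by
    have e : Real.pi * t = Real.pi * x - (round x : ℤ) * Real.pi := by rw [ht]; ring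
    rw [e, Real.sin_sub, hsin0, mul_zero, sub_zero, abs_mul, hcos1, mul_one]
  rw [habs]
  exact four_abs_le_norm_sin (abs_sub_round x)



theorem stmt12 :
    ∃ C₀ : ℝ, 0 < C₀ ∧
      ∀ ω : ℝ, ω ∈ Set.Ioo (0 : ℝ) 1 → Irrational ω →
        Summable (fun n : ℕ => Real.log (cfDen ω (n + 1)) / cfDen ω n) →
        ENNReal.ofReal
            (Real.exp (-(∑' n : ℕ, Real.log (cfDen ω (n + 1)) / cfDen ω n) - C₀)) ≤
          radiusOfConv
            (fun n =>
              (qPoch (Complex.exp (2 * Real.pi * Complex.I * ω))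
                  (Complex.exp (2 * Real.pi * Complex.I * ω)) n)⁻¹) := by
  have hl4 : (0:ℝ) ≤ Real.log 4 := Real.log_nonneg (by norm_num)
  refine ⟨4 * Real.log 4 + 1, by linarith, ?_⟩
  intro ω _ hω hsum
  set C₀ : ℝ := 4 * Real.log 4 + 1 with hC₀
  set B : ℝ := ∑' n : ℕ, Real.log (cfDen ω (n + 1)) / cfDen ω n with hB
  set r : ℝ := Real.exp (-B - C₀) with hr
  set q : ℂ := Complex.exp (2 * Real.pi * Complex.I * ω) with hq
  set c : ℕ → ℂ := fun n => (qPoch q q n)⁻¹ with hc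
  have hrpos : 0 < r := Real.exp_pos _
  -- the fundamental coefficient bound
  have hbound : ∀ n : ℕ, ‖c n‖ * r ^ n ≤ 1 := by
    intro n
    -- each factor of the q-Pochhammer product
    have hfac : ∀ k : ℕ, Ef ω (k+1) ≤ ‖(1 : ℂ) - q ^ k * q‖ := by
      intro k
      have hqpow : q ^ k * q = Complex.exp (2 * Real.pi * Complex.I * (((k+1 : ℕ) : ℝ) : ℂ) * ω) := by
        rw [hq, ← pow_succ, ← Complex.exp_nat_mul]
        congr 1
        push_cast
        ring
      have e2 : (2 : ℂ) * Real.pi * Complex.I * (((k+1 : ℕ) : ℝ) : ℂ) * ω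
          = 2 * Real.pi * Complex.I * ((((k+1 : ℕ) : ℝ) * ω : ℝ) : ℂ) := by
        push_cast
        ring
      rw [hqpow, e2]
      have h4 := norm_one_sub_exp_ge (((k+1 : ℕ) : ℝ) * ω)
      have hE : Ef ω (k+1) = |((k+1 : ℕ) : ℝ) * ω - (round (((k+1 : ℕ) : ℝ) * ω) : ℤ)| := rfl
      rw [hE]
      have := abs_nonneg (((k+1 : ℕ) : ℝ) * ω - (round (((k+1 : ℕ) : ℝ) * ω) : ℤ))
      linarith
    have hEpos : ∀ k : ℕ, 0 < Ef ω (k+1) := fun k => Ef_pos hω (k+1) (by omega)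
    set P : ℝ := ∏ k ∈ Finset.range n, Ef ω (k+1) with hP
    have hPpos : 0 < P := Finset.prod_pos (fun k _ => hEpos k)
    have hnorm : P ≤ ‖qPoch q q n‖ := by
      rw [qPoch, norm_prod]
      exact Finset.prod_le_prod (fun k _ => (hEpos k).le) (fun k _ => hfac k)
    have hcn : ‖c n‖ ≤ P⁻¹ := by
      rw [hc]
      simp only [norm_inv]
      exact inv_anti₀ hPpos hnorm
    have hPinv : P⁻¹ = Real.exp (∑ k ∈ Finset.range n, Real.log ((Ef ω (k+1))⁻¹)) := by
      have hlogP : Real.log P = ∑ k ∈ Finset.range n, Real.log (Ef ω (k+1)) :=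
        Real.log_prod (fun k _ => (hEpos k).ne')
      have : ∑ k ∈ Finset.range n, Real.log ((Ef ω (k+1))⁻¹)
          = - Real.log P := by
        rw [hlogP, ← Finset.sum_neg_distrib]
        exact Finset.sum_congr rfl (fun k _ => Real.log_inv _)
      rw [this, Real.exp_neg, Real.exp_log hPpos]
    have hkey := key_sum hω hsum n
    have hcn2 : ‖c n‖ ≤ Real.exp ((n : ℝ) * (B + 4 * Real.log 4)) := by
      calc ‖c n‖ ≤ P⁻¹ := hcn
        _ = Real.exp (∑ k ∈ Finset.range n, Real.log ((Ef ω (k+1))⁻¹)) := hPinv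
        _ ≤ Real.exp ((n : ℝ) * (B + 4 * Real.log 4)) := Real.exp_le_exp.2 hkey
    have hrn : r ^ n = Real.exp ((n : ℝ) * (-B - C₀)) := by
      rw [hr, Real.exp_nat_mul]
    calc ‖c n‖ * r ^ n ≤ Real.exp ((n : ℝ) * (B + 4 * Real.log 4)) * r ^ n := by
          apply mul_le_mul_of_nonneg_right hcn2 (by positivity)
      _ = Real.exp ((n : ℝ) * (B + 4 * Real.log 4) + (n : ℝ) * (-B - C₀)) := by
          rw [hrn, ← Real.exp_add]
      _ = Real.exp (-(n : ℝ)) := by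
          congr 1
          rw [hC₀]
          ring
      _ ≤ 1 := Real.exp_le_one_iff.2 (neg_nonpos.2 (Nat.cast_nonneg n))
  -- conclude about the radius
  have hcoe : ((r.toNNReal : NNReal) : ℝ) = r := Real.coe_toNNReal _ hrpos.le
  have hofReal : ENNReal.ofReal r = ((r.toNNReal : NNReal) : ENNReal) := rfl
  rw [show Real.exp (-B - C₀) = r from rfl] at *
  rw [radiusOfConv]
  calc ENNReal.ofReal r = ((r.toNNReal : NNReal) : ENNReal) := hofReal
    _ ≤ _ := by
        apply le_iSup_of_le r.toNNReal
        apply le_iSup_of_le (1 : ℝ)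
        have hb : ∀ n : ℕ, ‖c n‖ * ((r.toNNReal : NNReal) : ℝ) ^ n ≤ 1 := by
          intro n
          rw [hcoe]
          exact hbound n
        exact le_iSup_of_le hb le_rfl
end

section
/- Let q ∈ ℂ with |q| = 1, ν ≥ 1, and let a_0,…,a_ν ∈ ℂ[[x]], a_i(x) = Σ_{n≥0} a_{i,n} x^n, each with positive radius of convergence. Define F_l(T) = Σ_{i=0}^ν a_{i,l} T^i and assume: F_0(1) = 0; F_0(q^n) ≠ 0 for every integer n ≥ 1; and the power series Σ_{n≥1} x^n/(F_0(q)·F_0(q²)···F_0(q^n)) has positive radius of convergence. Then there exists a unique formal power series y ∈ ℂ[[x]] with constant term 1 satisfying Σ_{i=0}^ν a_i(x)·y(q^i x) = 0, and this y has positive radius of convergence. -/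
open scoped BigOperators

lemma radiusOfConv_pos_iff (c : ℕ → ℂ) :
    0 < radiusOfConv c ↔ ∃ r : NNReal, 0 < r ∧ ∃ C : ℝ, ∀ n : ℕ, ‖c n‖ * (r : ℝ) ^ n ≤ C := by
  constructor
  · intro h
    rw [radiusOfConv, lt_iSup_iff] at h
    obtain ⟨r, hr⟩ := h
    rw [lt_iSup_iff] at hr
    obtain ⟨C, hC⟩ := hr
    rw [lt_iSup_iff] at hC
    obtain ⟨hP, hpos⟩ := hC
    exact ⟨r, by exact_mod_cast hpos, C, hP⟩
  · rintro ⟨r, hr, C, hC⟩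
    have : (r : ENNReal) ≤ radiusOfConv c := by
      rw [radiusOfConv]
      exact le_iSup_of_le r (le_iSup_of_le C (le_iSup_of_le hC le_rfl))
    exact lt_of_lt_of_le (by exact_mod_cast hr) this

noncomputable def ycAux (F : ℕ → ℂ → ℂ) (q : ℂ) : ℕ → ℂ
  | 0 => 1
  | (n+1) => -(F 0 (q ^ (n+1)))⁻¹ *
      ∑ m ∈ (Finset.range (n+1)).attach, F (n+1-(m:ℕ)) (q ^ (m:ℕ)) * ycAux F q m
decreasing_by exact Finset.mem_range.mp m.2

lemma ycAux_succ (F : ℕ → ℂ → ℂ) (q : ℂ) (n : ℕ) :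
    ycAux F q (n+1) = -(F 0 (q ^ (n+1)))⁻¹ *
      ∑ m ∈ Finset.range (n+1), F (n+1-m) (q ^ m) * ycAux F q m := by
  rw [ycAux]
  congr 1
  exact Finset.sum_attach _ (fun m => F (n+1-m) (q ^ m) * ycAux F q m)

lemma ycAux_zero (F : ℕ → ℂ → ℂ) (q : ℂ) : ycAux F q 0 = 1 := by rw [ycAux]

lemma yc_rec (F : ℕ → ℂ → ℂ) (q : ℂ) (hF1 : F 0 1 = 0)
    (hFn : ∀ n : ℕ, 1 ≤ n → F 0 (q ^ n) ≠ 0) (n : ℕ) :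
    ∑ m ∈ Finset.range (n+1), F (n-m) (q ^ m) * ycAux F q m = 0 := by
  cases n with
  | zero => simp [ycAux, hF1]
  | succ N =>
    rw [Finset.sum_range_succ, ycAux_succ]
    have h := hFn (N+1) (by omega)
    have : F (N+1-(N+1)) (q ^ (N+1)) * (-(F 0 (q ^ (N+1)))⁻¹ *
        ∑ m ∈ Finset.range (N+1), F (N+1-m) (q ^ m) * ycAux F q m)
        = -∑ m ∈ Finset.range (N+1), F (N+1-m) (q ^ m) * ycAux F q m := by
      simp only [Nat.sub_self]
      field_simp
    rw [this, add_neg_cancel]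

lemma coeff_sum_eq (q : ℂ) (ν : ℕ) (a : Fin (ν+1) → PowerSeries ℂ) (z : PowerSeries ℂ) (n : ℕ) :
    PowerSeries.coeff n (∑ i : Fin (ν + 1), a i * PowerSeries.rescale (q ^ (i : ℕ)) z)
      = ∑ m ∈ Finset.range (n+1),
          (∑ i : Fin (ν + 1), PowerSeries.coeff (n-m) (a i) * (q ^ m) ^ (i : ℕ)) *
            PowerSeries.coeff m z := by
  rw [map_sum]
  simp_rw [PowerSeries.coeff_mul, PowerSeries.coeff_rescale]
  rw [Finset.sum_comm]
  have h1 : ∀ p ∈ Finset.HasAntidiagonal.antidiagonal n,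
      (∑ i : Fin (ν+1), PowerSeries.coeff p.1 (a i) * ((q ^ (i:ℕ)) ^ p.2 * PowerSeries.coeff p.2 z))
      = (∑ i : Fin (ν+1), PowerSeries.coeff p.1 (a i) * (q ^ p.2) ^ (i:ℕ)) * PowerSeries.coeff p.2 z := by
    intro p _
    rw [Finset.sum_mul]
    refine Finset.sum_congr rfl fun i _ => ?_
    rw [pow_right_comm]
    ring
  rw [Finset.sum_congr rfl h1]
  rw [Finset.Nat.sum_antidiagonal_eq_sum_range_succ
    (fun l m => (∑ i : Fin (ν+1), PowerSeries.coeff l (a i) * (q ^ m) ^ (i:ℕ)) * PowerSeries.coeff m z)]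
  rw [← Finset.sum_range_reflect]
  refine Finset.sum_congr rfl fun m hm => ?_
  have hm' : m ≤ n := by simpa [Nat.lt_succ_iff] using hm
  have e1 : n.succ - 1 - m = n - m := by omega
  have e2 : n - (n - m) = m := by omega
  rw [e1, e2]

lemma u_bound (F : ℕ → ℂ → ℂ) (q : ℂ) (hFn : ∀ n : ℕ, 1 ≤ n → F 0 (q ^ n) ≠ 0)
    (b : ℝ) (hb : 1 ≤ b) (hFb : ∀ l m : ℕ, ‖F l (q ^ m)‖ ≤ b ^ (l+1)) :
    ∀ n : ℕ, ‖(∏ k ∈ Finset.range n, F 0 (q ^ (k+1))) * ycAux F q n‖ ≤ (2 * b ^ 2) ^ n := by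
  have hb0 : (0:ℝ) < b := lt_of_lt_of_le one_pos hb
  intro n
  induction n using Nat.strong_induction_on with
  | _ n ih =>
    match n with
    | 0 => simp [ycAux]
    | N+1 =>
      have hne := hFn (N+1) (by omega)
      have key : (∏ k ∈ Finset.range (N+1), F 0 (q ^ (k+1))) * ycAux F q (N+1)
          = -∑ m ∈ Finset.range (N+1), F (N+1-m) (q ^ m) *
              ((∏ k ∈ Finset.Ico m N, F 0 (q ^ (k+1))) *
               ((∏ k ∈ Finset.range m, F 0 (q ^ (k+1))) * ycAux F q m)) := by
        rw [ycAux_succ, Finset.prod_range_succ]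
        have hL : (∏ k ∈ Finset.range N, F 0 (q ^ (k+1))) * F 0 (q ^ (N+1)) *
            (-(F 0 (q ^ (N+1)))⁻¹ *
              ∑ m ∈ Finset.range (N+1), F (N+1-m) (q ^ m) * ycAux F q m)
            = -((∏ k ∈ Finset.range N, F 0 (q ^ (k+1))) *
              ∑ m ∈ Finset.range (N+1), F (N+1-m) (q ^ m) * ycAux F q m) := by
          field_simp
        rw [hL, neg_inj, Finset.mul_sum]
        refine Finset.sum_congr rfl fun m hm => ?_
        have hm' : m ≤ N := by simpa [Nat.lt_succ_iff] using hm
        rw [← Finset.prod_range_mul_prod_Ico (fun k => F 0 (q ^ (k+1))) hm']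
        ring
      rw [key, norm_neg]
      calc ‖∑ m ∈ Finset.range (N+1), F (N+1-m) (q ^ m) *
              ((∏ k ∈ Finset.Ico m N, F 0 (q ^ (k+1))) *
               ((∏ k ∈ Finset.range m, F 0 (q ^ (k+1))) * ycAux F q m))‖
          ≤ ∑ m ∈ Finset.range (N+1), ‖F (N+1-m) (q ^ m) *
              ((∏ k ∈ Finset.Ico m N, F 0 (q ^ (k+1))) *
               ((∏ k ∈ Finset.range m, F 0 (q ^ (k+1))) * ycAux F q m))‖ :=
            norm_sum_le _ _
        _ ≤ ∑ m ∈ Finset.range (N+1), 2 ^ m * (b ^ 2) ^ (N+1) := by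
            refine Finset.sum_le_sum fun m hm => ?_
            have hm' : m ≤ N := by simpa [Nat.lt_succ_iff] using hm
            rw [norm_mul, norm_mul]
            have h1 : ‖F (N+1-m) (q ^ m)‖ ≤ b ^ (N+1-m+1) := hFb _ _
            have h2 : ‖∏ k ∈ Finset.Ico m N, F 0 (q ^ (k+1))‖ ≤ b ^ (N-m) := by
              rw [norm_prod]
              calc ∏ k ∈ Finset.Ico m N, ‖F 0 (q ^ (k+1))‖
                  ≤ ∏ k ∈ Finset.Ico m N, b :=
                    Finset.prod_le_prod (fun k _ => norm_nonneg _)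
                      (fun k _ => by simpa using hFb 0 (k+1))
                _ = b ^ (N-m) := by rw [Finset.prod_const, Nat.card_Ico]
            have h3 : ‖(∏ k ∈ Finset.range m, F 0 (q ^ (k+1))) * ycAux F q m‖
                ≤ (2*b^2) ^ m := ih m (by omega)
            calc ‖F (N+1-m) (q ^ m)‖ * (‖∏ k ∈ Finset.Ico m N, F 0 (q ^ (k+1))‖ *
                  ‖(∏ k ∈ Finset.range m, F 0 (q ^ (k+1))) * ycAux F q m‖)
                ≤ b ^ (N+1-m+1) * (b ^ (N-m) * (2*b^2) ^ m) := by
                  apply mul_le_mul h1 _ (by positivity) (by positivity)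
                  exact mul_le_mul h2 h3 (norm_nonneg _) (by positivity)
              _ = 2 ^ m * (b ^ 2) ^ (N+1) := by
                  rw [mul_pow, ← pow_mul, ← pow_mul]
                  rw [show 2*(N+1) = (N+1-m+1) + (2*m + (N-m)) by omega, pow_add, pow_add]
                  ring
        _ = (∑ m ∈ Finset.range (N+1), (2:ℝ) ^ m) * (b ^ 2) ^ (N+1) := by
              rw [Finset.sum_mul]
        _ ≤ 2 ^ (N+1) * (b ^ 2) ^ (N+1) := by
              apply mul_le_mul_of_nonneg_right _ (by positivity)
              rw [geom_sum_eq (by norm_num : (2:ℝ) ≠ 1)]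
              norm_num
        _ = (2 * b ^ 2) ^ (N+1) := by rw [mul_pow]

theorem stmt14 (q : ℂ) (hq : ‖q‖ = 1) (ν : ℕ) (hν : 1 ≤ ν)
    (a : Fin (ν + 1) → PowerSeries ℂ)
    (ha : ∀ i, 0 < radiusOfConv (fun n => PowerSeries.coeff n (a i)))
    (F : ℕ → ℂ → ℂ)
    (hF : F = fun l T => ∑ i : Fin (ν + 1), PowerSeries.coeff l (a i) * T ^ (i : ℕ))
    (hF1 : F 0 1 = 0)
    (hFn : ∀ n : ℕ, 1 ≤ n → F 0 (q ^ n) ≠ 0)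
    (hconv :
      0 < radiusOfConv
          (fun n => if n = 0 then 0 else (∏ k ∈ Finset.range n, F 0 (q ^ (k + 1)))⁻¹)) :
    ∃ y : PowerSeries ℂ,
      (PowerSeries.constantCoeff y = 1 ∧
          (∑ i : Fin (ν + 1), a i * PowerSeries.rescale (q ^ (i : ℕ)) y = 0) ∧
          0 < radiusOfConv (fun n => PowerSeries.coeff n y)) ∧
        ∀ z : PowerSeries ℂ, PowerSeries.constantCoeff z = 1 →
          (∑ i : Fin (ν + 1), a i * PowerSeries.rescale (q ^ (i : ℕ)) z = 0) → z = y := by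
  have hFdef : ∀ (l : ℕ) (T : ℂ),
      (∑ i : Fin (ν+1), PowerSeries.coeff l (a i) * T ^ (i:ℕ)) = F l T := by
    intro l T; rw [hF]
  have hcoeff : ∀ (z : PowerSeries ℂ) (n : ℕ),
      PowerSeries.coeff n (∑ i : Fin (ν + 1), a i * PowerSeries.rescale (q ^ (i : ℕ)) z)
        = ∑ m ∈ Finset.range (n+1), F (n-m) (q ^ m) * PowerSeries.coeff m z := by
    intro z n
    rw [coeff_sum_eq]
    exact Finset.sum_congr rfl fun m _ => by rw [hFdef]
  set y : PowerSeries ℂ := PowerSeries.mk (ycAux F q) with hy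
  have hycoeff : ∀ n : ℕ, PowerSeries.coeff n y = ycAux F q n := fun n =>
    PowerSeries.coeff_mk n _
  have hyconst : PowerSeries.constantCoeff y = 1 := by
    rw [← PowerSeries.coeff_zero_eq_constantCoeff, hycoeff, ycAux_zero]
  have hyeq : ∑ i : Fin (ν + 1), a i * PowerSeries.rescale (q ^ (i : ℕ)) y = 0 := by
    ext n
    rw [hcoeff, map_zero]
    calc ∑ m ∈ Finset.range (n+1), F (n-m) (q ^ m) * PowerSeries.coeff m y
        = ∑ m ∈ Finset.range (n+1), F (n-m) (q ^ m) * ycAux F q m :=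
          Finset.sum_congr rfl fun m _ => by rw [hycoeff]
      _ = 0 := yc_rec F q hF1 hFn n
  refine ⟨y, ⟨hyconst, hyeq, ?_⟩, ?_⟩
  · -- convergence
    have ha' : ∀ i, ∃ r : NNReal, 0 < r ∧ ∃ C : ℝ,
        ∀ n : ℕ, ‖PowerSeries.coeff n (a i)‖ * (r:ℝ) ^ n ≤ C := fun i =>
      (radiusOfConv_pos_iff _).mp (ha i)
    choose r hrpos C hC using ha'
    have hne : (Finset.univ : Finset (Fin (ν+1))).Nonempty := Finset.univ_nonempty
    set ρ : ℝ := Finset.univ.inf' hne (fun i => (r i : ℝ)) with hρdef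
    have hρ : 0 < ρ := by
      rw [hρdef, Finset.lt_inf'_iff]
      exact fun i _ => by exact_mod_cast hrpos i
    set Cm : ℝ := Finset.univ.sup' hne C with hCmdef
    have habd : ∀ (i : Fin (ν+1)) (n : ℕ), ‖PowerSeries.coeff n (a i)‖ * ρ ^ n ≤ Cm := by
      intro i n
      calc ‖PowerSeries.coeff n (a i)‖ * ρ ^ n
          ≤ ‖PowerSeries.coeff n (a i)‖ * (r i : ℝ) ^ n := by
            apply mul_le_mul_of_nonneg_left _ (norm_nonneg _)
            exact pow_le_pow_left₀ hρ.le (Finset.inf'_le _ (Finset.mem_univ i)) n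
        _ ≤ C i := hC i n
        _ ≤ Cm := Finset.le_sup' C (Finset.mem_univ i)
    have hCm0 : 0 ≤ Cm := le_trans (by positivity) (habd 0 0)
    set b : ℝ := max ((ν+1 : ℝ) * Cm) (max ρ⁻¹ 1) with hbdef
    have hb : 1 ≤ b := le_trans (le_max_right _ _) (le_max_right _ _)
    have hq1 : ∀ m : ℕ, ‖(q : ℂ) ^ m‖ = 1 := by
      intro m
      rw [norm_pow, hq, one_pow]
    have hFb : ∀ l m : ℕ, ‖F l (q ^ m)‖ ≤ b ^ (l+1) := by
      intro l m
      rw [← hFdef]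
      have hρl : (0:ℝ) < ρ ^ l := by positivity
      calc ‖∑ i : Fin (ν+1), PowerSeries.coeff l (a i) * (q ^ m) ^ (i:ℕ)‖
          ≤ ∑ i : Fin (ν+1), ‖PowerSeries.coeff l (a i) * (q ^ m) ^ (i:ℕ)‖ :=
            norm_sum_le _ _
        _ ≤ ∑ _i : Fin (ν+1), Cm * (ρ⁻¹) ^ l := by
            refine Finset.sum_le_sum fun i _ => ?_
            rw [norm_mul, norm_pow, hq1, one_pow, mul_one]
            rw [inv_pow, ← div_eq_mul_inv, le_div_iff₀ hρl]
            exact habd i l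
        _ = ((ν+1 : ℝ) * Cm) * (ρ⁻¹) ^ l := by
            rw [Finset.sum_const, Finset.card_univ, Fintype.card_fin, nsmul_eq_mul]
            push_cast
            ring
        _ ≤ b * b ^ l := by
            apply mul_le_mul (le_max_left _ _) _ (by positivity)
              (le_trans zero_le_one hb)
            exact pow_le_pow_left₀ (by positivity)
              (le_trans (le_max_left _ _) (le_max_right _ _)) l
        _ = b ^ (l+1) := by rw [pow_succ]; ring
    have hu := u_bound F q hFn b hb hFb
    obtain ⟨s, hs, D, hD⟩ := (radiusOfConv_pos_iff _).mp hconv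
    have hs0 : (0:ℝ) < (s:ℝ) := by exact_mod_cast hs
    have hD0 : (0:ℝ) ≤ D := by
      have := hD 0
      simpa using this
    set c2 : ℝ := 2 * b ^ 2 with hc2def
    have hc2 : 0 < c2 := by positivity
    set t : ℝ := (s:ℝ) / c2 with htdef
    have ht : 0 < t := by positivity
    have hyb : ∀ n : ℕ, ‖ycAux F q n‖ * t ^ n ≤ max D 1 := by
      intro n
      cases n with
      | zero =>
        simp [ycAux]
      | succ N =>
        set n := N + 1
        have hPne : (∏ k ∈ Finset.range n, F 0 (q ^ (k+1))) ≠ 0 :=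
          Finset.prod_ne_zero_iff.mpr fun k _ => hFn (k+1) (by omega)
        have hyceq : ycAux F q n = (∏ k ∈ Finset.range n, F 0 (q ^ (k+1)))⁻¹ *
            ((∏ k ∈ Finset.range n, F 0 (q ^ (k+1))) * ycAux F q n) := by
          field_simp
        have h5 : ‖(∏ k ∈ Finset.range n, F 0 (q ^ (k+1)))‖⁻¹ * (s:ℝ) ^ n ≤ D := by
          have := hD n
          rw [if_neg (by omega : ¬ n = 0)] at this
          simpa [norm_inv] using this
        have h4 := hu n
        have hPn : (0:ℝ) < ‖(∏ k ∈ Finset.range n, F 0 (q ^ (k+1)))‖ :=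
          norm_pos_iff.mpr hPne
        calc ‖ycAux F q n‖ * t ^ n
            = (‖(∏ k ∈ Finset.range n, F 0 (q ^ (k+1)))‖⁻¹ *
                ‖(∏ k ∈ Finset.range n, F 0 (q ^ (k+1))) * ycAux F q n‖) *
                ((s:ℝ) ^ n * (c2 ^ n)⁻¹) := by
              rw [← norm_inv, ← norm_mul, ← hyceq, htdef, div_pow, div_eq_mul_inv]
          _ ≤ (‖(∏ k ∈ Finset.range n, F 0 (q ^ (k+1)))‖⁻¹ * c2 ^ n) *
                ((s:ℝ) ^ n * (c2 ^ n)⁻¹) := by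
              apply mul_le_mul_of_nonneg_right _ (by positivity)
              exact mul_le_mul_of_nonneg_left h4 (by positivity)
          _ = (c2 ^ n * (c2 ^ n)⁻¹) *
                (‖(∏ k ∈ Finset.range n, F 0 (q ^ (k+1)))‖⁻¹ * (s:ℝ) ^ n) := by ring
          _ = ‖(∏ k ∈ Finset.range n, F 0 (q ^ (k+1)))‖⁻¹ * (s:ℝ) ^ n := by
              rw [mul_inv_cancel₀ (by positivity : (c2:ℝ) ^ n ≠ 0), one_mul]
          _ ≤ D := h5
          _ ≤ max D 1 := le_max_left _ _
    apply (radiusOfConv_pos_iff _).mpr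
    refine ⟨t.toNNReal, Real.toNNReal_pos.mpr ht, max D 1, fun n => ?_⟩
    rw [Real.coe_toNNReal _ ht.le, hycoeff]
    exact hyb n
  · -- uniqueness
    intro z hz1 hzeq
    have hzc : ∀ n : ℕ, PowerSeries.coeff n z = ycAux F q n := by
      intro n
      induction n using Nat.strong_induction_on with
      | _ n ih =>
        match n with
        | 0 =>
          rw [PowerSeries.coeff_zero_eq_constantCoeff, hz1, ycAux_zero]
        | N+1 =>
          have h0 : ∑ m ∈ Finset.range (N+2), F (N+1-m) (q ^ m) * PowerSeries.coeff m z
              = 0 := by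
            have := congrArg (PowerSeries.coeff (N+1)) hzeq
            rwa [hcoeff, map_zero] at this
          rw [Finset.sum_range_succ] at h0
          have hS : ∑ m ∈ Finset.range (N+1), F (N+1-m) (q ^ m) * PowerSeries.coeff m z
              = ∑ m ∈ Finset.range (N+1), F (N+1-m) (q ^ m) * ycAux F q m :=
            Finset.sum_congr rfl fun m hm => by
              have hmlt : m < N + 1 := Finset.mem_range.mp hm
              rw [ih m hmlt]
          rw [hS, Nat.sub_self] at h0
          have hne := hFn (N+1) (by omega)
          rw [ycAux_succ]
          have hzz : PowerSeries.coeff (N+1) z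
              = (F 0 (q ^ (N+1)))⁻¹ * (F 0 (q ^ (N+1)) * PowerSeries.coeff (N+1) z) :=
            (inv_mul_cancel_left₀ hne _).symm
          rw [hzz]
          rw [show F 0 (q ^ (N+1)) * PowerSeries.coeff (N+1) z
              = -∑ m ∈ Finset.range (N+1), F (N+1-m) (q ^ m) * ycAux F q m from by
            linear_combination h0]
          ring
    ext n
    rw [hzc, hycoeff]
end

section
/- Let q ∈ ℂ with |q| = 1, q not a root of unity, and suppose the power series Σ_{n≥0} x^n/(q;q)_n has positive radius of convergence. Let u ∈ ℂ[[x]] be a power series with constant term 1 and positive radius of convergence. Then the unique formal power series h ∈ ℂ[[x]] with h(0) = 1 and h(qx) = u(x)·h(x) has positive radius of convergence. -/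
open scoped BigOperators

lemma radius_pos_elim {c : ℕ → ℂ} (h : 0 < radiusOfConv c) :
    ∃ r : NNReal, 0 < r ∧ ∃ C : ℝ, ∀ n : ℕ, ‖c n‖ * (r : ℝ) ^ n ≤ C := by
  unfold radiusOfConv at h
  rw [lt_iSup_iff] at h
  obtain ⟨r, hr⟩ := h
  rw [lt_iSup_iff] at hr
  obtain ⟨C, hC⟩ := hr
  rw [lt_iSup_iff] at hC
  obtain ⟨hP, hpos⟩ := hC
  exact ⟨r, by exact_mod_cast hpos, C, hP⟩

lemma radius_pos_intro {c : ℕ → ℂ} (r : NNReal) (hr : 0 < r) (C : ℝ)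
    (h : ∀ n : ℕ, ‖c n‖ * (r : ℝ) ^ n ≤ C) : 0 < radiusOfConv c := by
  have hle : (r : ENNReal) ≤ radiusOfConv c := by
    unfold radiusOfConv
    exact le_iSup_of_le r (le_iSup_of_le C (le_iSup_of_le h le_rfl))
  exact lt_of_lt_of_le (by exact_mod_cast hr) hle

lemma qPoch_ne_zero {q : ℂ} (hq : ∀ n : ℕ, 1 ≤ n → q ^ n ≠ 1) (n : ℕ) :
    qPoch q q n ≠ 0 := by
  unfold qPoch
  refine Finset.prod_ne_zero_iff.mpr fun k _ => ?_
  intro hk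
  apply hq (k + 1) (Nat.le_add_left 1 k)
  have : q ^ k * q = 1 := by linear_combination -hk
  rwa [← pow_succ] at this

lemma qPoch_norm_le {q : ℂ} (hqabs : ‖q‖ = 1) {a b : ℕ} (hab : a ≤ b) :
    ‖qPoch q q b‖ ≤ 2 ^ (b - a) * ‖qPoch q q a‖ := by
  unfold qPoch
  rw [← Finset.prod_range_mul_prod_Ico _ hab, norm_mul, mul_comm]
  apply mul_le_mul_of_nonneg_right _ (norm_nonneg _)
  calc ‖∏ k ∈ Finset.Ico a b, (1 - q ^ k * q)‖
      = ∏ k ∈ Finset.Ico a b, ‖(1 - q ^ k * q)‖ := norm_prod _ _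
    _ ≤ ∏ k ∈ Finset.Ico a b, (2 : ℝ) := by
        apply Finset.prod_le_prod (fun _ _ => norm_nonneg _)
        intro k _
        have hn1 : ‖q ^ k * q‖ = 1 := by
          rw [norm_mul, norm_pow, hqabs, one_pow, one_mul]
        calc ‖(1 - q ^ k * q)‖ ≤ ‖(1 : ℂ)‖ + ‖q ^ k * q‖ := norm_sub_le _ _
          _ = 2 := by rw [hn1, norm_one]; norm_num
    _ = 2 ^ (b - a) := by rw [Finset.prod_const, Nat.card_Ico]

theorem stmt16 (q : ℂ) (hqabs : ‖q‖ = 1) (hq0 : q ≠ 0)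
    (hq : ∀ n : ℕ, 1 ≤ n → q ^ n ≠ 1)
    (hQ : 0 < radiusOfConv (fun n => (qPoch q q n)⁻¹))
    (u : PowerSeries ℂ) (hu0 : PowerSeries.constantCoeff u = 1)
    (hu : 0 < radiusOfConv (fun n => PowerSeries.coeff n u))
    (h : PowerSeries ℂ) (hh0 : PowerSeries.constantCoeff h = 1)
    (hh : PowerSeries.rescale q h = u * h) :
    0 < radiusOfConv (fun n => PowerSeries.coeff n h) := by
  obtain ⟨r, hrpos, C, hC⟩ := radius_pos_elim hQ
  obtain ⟨ρ, hρpos, M, hM⟩ := radius_pos_elim hu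
  -- u-coefficient bound
  have hρR : (0 : ℝ) < (ρ : ℝ) := by exact_mod_cast hρpos
  set s : ℝ := (ρ : ℝ)⁻¹ with hs
  have hspos : 0 < s := inv_pos.mpr hρR
  have hM1 : (1 : ℝ) ≤ M := by
    have := hM 0
    simpa [hu0, PowerSeries.coeff_zero_eq_constantCoeff] using this
  have hubound : ∀ k : ℕ, ‖PowerSeries.coeff k u‖ ≤ M * s ^ k := by
    intro k
    have h1 := hM k
    have h2 : ‖PowerSeries.coeff k u‖ = ‖PowerSeries.coeff k u‖ * (ρ : ℝ) ^ k * s ^ k := by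
      rw [mul_assoc, ← mul_pow, mul_inv_cancel₀ (ne_of_gt hρR), one_pow, mul_one]
    rw [h2]
    exact mul_le_mul_of_nonneg_right h1 (pow_nonneg (le_of_lt hspos) k)
  -- the constant A
  set A : ℝ := 4 * s + 2 * M * s with hA
  have hApos : 0 < A := by positivity
  have hA4s : 4 * s ≤ A := by nlinarith
  have hA2Ms : 2 * M * s ≤ A := by nlinarith
  -- the recursion
  have hrec : ∀ n : ℕ, (q ^ n - 1) * PowerSeries.coeff n h =
      ∑ i ∈ Finset.range n, PowerSeries.coeff (i + 1) u * PowerSeries.coeff (n - (i + 1)) h := by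
    intro n
    have e := congrArg (PowerSeries.coeff n) hh
    rw [PowerSeries.coeff_rescale, PowerSeries.coeff_mul,
      Finset.Nat.sum_antidiagonal_eq_sum_range_succ_mk, Finset.sum_range_succ'] at e
    have e0 : PowerSeries.coeff 0 u = 1 := by
      rw [PowerSeries.coeff_zero_eq_constantCoeff, hu0]
    rw [e0] at e
    simp only [Nat.sub_zero, one_mul] at e
    linear_combination e
  -- main induction: ‖h_n‖ * ‖qPoch n‖ ≤ A ^ n
  have key : ∀ n : ℕ, ‖PowerSeries.coeff n h‖ * ‖qPoch q q n‖ ≤ A ^ n := by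
    intro n
    induction n using Nat.strong_induction_on with
    | _ n ih =>
      match n with
      | 0 =>
        simp [qPoch, PowerSeries.coeff_zero_eq_constantCoeff, hh0]
      | (m + 1) =>
        have hqp : qPoch q q (m + 1) = qPoch q q m * (1 - q ^ m * q) := by
          unfold qPoch; rw [Finset.prod_range_succ]
        have hnormfac : ‖(1 - q ^ m * q)‖ = ‖q ^ (m + 1) - 1‖ := by
          rw [← norm_neg]; congr 1; rw [pow_succ]; ring
        have lhs_eq : ‖PowerSeries.coeff (m + 1) h‖ * ‖qPoch q q (m + 1)‖ =
            ‖(q ^ (m + 1) - 1) * PowerSeries.coeff (m + 1) h‖ * ‖qPoch q q m‖ := by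
          rw [hqp, norm_mul, norm_mul, hnormfac]; ring
        rw [lhs_eq, hrec (m + 1)]
        have hsum : ‖∑ i ∈ Finset.range (m + 1),
            PowerSeries.coeff (i + 1) u * PowerSeries.coeff (m + 1 - (i + 1)) h‖ *
            ‖qPoch q q m‖ ≤
            ∑ i ∈ Finset.range (m + 1),
              ‖PowerSeries.coeff (i + 1) u‖ * ‖PowerSeries.coeff (m - i) h‖ *
                ‖qPoch q q m‖ := by
          rw [← Finset.sum_mul]
          apply mul_le_mul_of_nonneg_right _ (norm_nonneg _)
          refine le_trans (norm_sum_le _ _) (Finset.sum_le_sum fun i _ => ?_)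
          rw [norm_mul]
          have : m + 1 - (i + 1) = m - i := by omega
          rw [this]
        refine le_trans hsum ?_
        -- per-term bound
        have hterm : ∀ i ∈ Finset.range (m + 1),
            ‖PowerSeries.coeff (i + 1) u‖ * ‖PowerSeries.coeff (m - i) h‖ * ‖qPoch q q m‖ ≤
            (1 / 2 : ℝ) ^ i * (M * s * A ^ m) := by
          intro i hi
          have him : i ≤ m := by
            simp only [Finset.mem_range] at hi; omega
          have hqn : ‖qPoch q q m‖ ≤ 2 ^ i * ‖qPoch q q (m - i)‖ := by
            have := qPoch_norm_le hqabs (Nat.sub_le m i)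
            rwa [Nat.sub_sub_self him] at this
          have hih : ‖PowerSeries.coeff (m - i) h‖ * ‖qPoch q q (m - i)‖ ≤ A ^ (m - i) :=
            ih (m - i) (by omega)
          have h1 : ‖PowerSeries.coeff (m - i) h‖ * ‖qPoch q q m‖ ≤ 2 ^ i * A ^ (m - i) := by
            calc ‖PowerSeries.coeff (m - i) h‖ * ‖qPoch q q m‖
                ≤ ‖PowerSeries.coeff (m - i) h‖ * (2 ^ i * ‖qPoch q q (m - i)‖) :=
                  mul_le_mul_of_nonneg_left hqn (norm_nonneg _)
              _ = 2 ^ i * (‖PowerSeries.coeff (m - i) h‖ * ‖qPoch q q (m - i)‖) := by ring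
              _ ≤ 2 ^ i * A ^ (m - i) := by
                  apply mul_le_mul_of_nonneg_left hih (by positivity)
          have h2 : ‖PowerSeries.coeff (i + 1) u‖ * ‖PowerSeries.coeff (m - i) h‖ *
              ‖qPoch q q m‖ ≤ (M * s ^ (i + 1)) * (2 ^ i * A ^ (m - i)) := by
            rw [mul_assoc]
            apply mul_le_mul (by simpa [mul_comm] using hubound (i + 1)) h1
              (mul_nonneg (norm_nonneg _) (norm_nonneg _)) (by positivity)
          refine le_trans h2 ?_
          -- (M * s^{i+1}) * (2^i * A^{m-i}) ≤ (1/2)^i * (M s A^m)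
          have hpow : (4 * s) ^ i * A ^ (m - i) ≤ A ^ m := by
            calc (4 * s) ^ i * A ^ (m - i) ≤ A ^ i * A ^ (m - i) := by
                  apply mul_le_mul_of_nonneg_right _ (by positivity)
                  exact pow_le_pow_left₀ (by positivity) hA4s i
              _ = A ^ m := by rw [← pow_add]; congr 1; omega
          have hMs : (0:ℝ) ≤ M * s := by positivity
          have expand : (M * s ^ (i + 1)) * (2 ^ i * A ^ (m - i)) =
              (1 / 2 : ℝ) ^ i * (M * s * ((4 * s) ^ i * A ^ (m - i))) := by
            have h2 : (1 / 2 : ℝ) ^ i * 2 ^ i = 1 := by rw [← mul_pow]; norm_num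
            have h4 : ((4 : ℝ) * s) ^ i = 2 ^ i * 2 ^ i * s ^ i := by
              rw [mul_pow]; congr 1; rw [← mul_pow]; norm_num
            calc (M * s ^ (i + 1)) * (2 ^ i * A ^ (m - i))
                = (1 / 2 : ℝ) ^ i * 2 ^ i * ((M * s ^ (i + 1)) * (2 ^ i * A ^ (m - i))) := by
                  rw [h2, one_mul]
              _ = (1 / 2 : ℝ) ^ i * (M * s * ((4 * s) ^ i * A ^ (m - i))) := by
                  rw [h4, pow_succ]; ring
          rw [expand]
          apply mul_le_mul_of_nonneg_left _ (by positivity)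
          exact mul_le_mul_of_nonneg_left hpow hMs
        refine le_trans (Finset.sum_le_sum hterm) ?_
        rw [← Finset.sum_mul]
        calc (∑ i ∈ Finset.range (m + 1), (1 / 2 : ℝ) ^ i) * (M * s * A ^ m)
            ≤ 2 * (M * s * A ^ m) := by
              apply mul_le_mul_of_nonneg_right (sum_geometric_two_le (m + 1)) (by positivity)
          _ = (2 * M * s) * A ^ m := by ring
          _ ≤ A * A ^ m := mul_le_mul_of_nonneg_right hA2Ms (by positivity)
          _ = A ^ (m + 1) := by rw [pow_succ]; ring
  -- conclude
  have hAinv : (0 : ℝ) < A⁻¹ := inv_pos.mpr hApos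
  refine radius_pos_intro (r * Real.toNNReal A⁻¹) ?_ C ?_
  · apply mul_pos hrpos
    rwa [Real.toNNReal_pos]
  · intro n
    have hcoe : ((r * Real.toNNReal A⁻¹ : NNReal) : ℝ) = (r : ℝ) * A⁻¹ := by
      rw [NNReal.coe_mul, Real.coe_toNNReal _ (le_of_lt hAinv)]
    rw [hcoe]
    have hPpos : 0 < ‖qPoch q q n‖ := norm_pos_iff.mpr (qPoch_ne_zero hq n)
    have hhn : ‖PowerSeries.coeff n h‖ ≤ A ^ n * ‖qPoch q q n‖⁻¹ := by
      rw [← div_eq_mul_inv, le_div_iff₀ hPpos]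
      exact key n
    have hCn := hC n
    simp only [norm_inv] at hCn
    calc ‖PowerSeries.coeff n h‖ * ((r : ℝ) * A⁻¹) ^ n
        ≤ (A ^ n * ‖qPoch q q n‖⁻¹) * ((r : ℝ) * A⁻¹) ^ n := by
          apply mul_le_mul_of_nonneg_right hhn (by positivity)
      _ = (‖qPoch q q n‖⁻¹ * (r : ℝ) ^ n) * (A ^ n * (A⁻¹) ^ n) := by
          rw [mul_pow]; ring
      _ = ‖qPoch q q n‖⁻¹ * (r : ℝ) ^ n := by
          rw [← mul_pow, mul_inv_cancel₀ (ne_of_gt hApos), one_pow, mul_one]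
      _ ≤ C := hCn
end

section
/- Let q ∈ ℂ*, not a root of unity, let μ, μ' ∈ ℤ and λ, λ' ∈ ℂ*. There exists a nonzero formal Laurent series g = Σ_{n} g_n x^n over ℂ (coefficients supported on a subset of ℤ bounded below) such that λ'·x^μ·g(qx) = λ·x^{μ'}·g(x), i.e., such that for every n ∈ ℤ one has λ'·q^{n−μ}·g_{n−μ} = λ·g_{n−μ'}, if and only if μ = μ' and λ/λ' ∈ q^ℤ = {q^k : k ∈ ℤ}. -/
theorem stmt17 (q : ℂ) (hq0 : q ≠ 0) (hq : ∀ n : ℕ, 1 ≤ n → q ^ n ≠ 1)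
    (μ μ' : ℤ) (lam lam' : ℂ) (hlam : lam ≠ 0) (hlam' : lam' ≠ 0) :
    (∃ g : ℤ → ℂ,
        (∃ N : ℤ, ∀ n : ℤ, n < N → g n = 0) ∧ g ≠ 0 ∧
          ∀ n : ℤ, lam' * q ^ (n - μ) * g (n - μ) = lam * g (n - μ')) ↔
      (μ = μ' ∧ ∃ k : ℤ, lam / lam' = q ^ k) := by
  constructor
  · rintro ⟨g, ⟨N, hN⟩, hg0, hrec⟩
    classical
    -- find minimal index with g nonzero
    have hinh : ∃ m : ℤ, g m ≠ 0 := by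
      by_contra h
      push_neg at h
      exact hg0 (funext fun m => h m)
    have hbdd : ∃ b : ℤ, ∀ m : ℤ, g m ≠ 0 → b ≤ m := by
      refine ⟨N, fun m hm => ?_⟩
      by_contra h
      push_neg at h
      exact hm (hN m h)
    obtain ⟨m₀, hm₀, hmin⟩ := Int.exists_least_of_bdd hbdd hinh
    have hlt : ∀ m : ℤ, m < m₀ → g m = 0 := by
      intro m hm
      by_contra h
      exact absurd (hmin m h) (not_le.mpr hm)
    have hμ : μ = μ' := by
      by_contra hne
      rcases lt_or_gt_of_ne hne with h | h
      · -- μ < μ' : use n = m₀ + μ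
        have := hrec (m₀ + μ)
        simp only [add_sub_cancel_right] at this
        have hz : g (m₀ + μ - μ') = 0 := hlt _ (by omega)
        rw [hz, mul_zero] at this
        have := mul_eq_zero.mp this
        rcases this with h' | h'
        · rcases mul_eq_zero.mp h' with h'' | h''
          · exact hlam' h''
          · exact zpow_ne_zero _ hq0 h''
        · exact hm₀ h'
      · -- μ' < μ : use n = m₀ + μ'
        have := hrec (m₀ + μ')
        simp only [add_sub_cancel_right] at this
        have hz : g (m₀ + μ' - μ) = 0 := hlt _ (by omega)
        rw [hz, mul_zero, zero_eq_mul] at this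
        rcases this with h' | h'
        · exact hlam h'
        · exact hm₀ h'
    refine ⟨hμ, m₀, ?_⟩
    have := hrec (m₀ + μ)
    rw [hμ] at this
    simp only [add_sub_cancel_right] at this
    have h1 : lam' * q ^ m₀ = lam := by
      exact mul_right_cancel₀ hm₀ this
    rw [← h1, mul_div_cancel_left₀ _ hlam']
  · rintro ⟨hμ, k, hk⟩
    refine ⟨fun n => if n = k then 1 else 0, ⟨k, fun n hn => if_neg (by omega)⟩,
      ?_, fun n => ?_⟩
    · intro h
      have := congrFun h k
      simp at this
    · subst hμ
      by_cases h : n - μ = k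
      · rw [h]
        simp only [if_pos rfl, mul_one]
        have : lam = lam' * q ^ k := by
          field_simp at hk
          rw [hk]
        rw [this]
      · simp [if_neg h]
end
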